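/- arXiv:1811.06338 — 4 statements merged into one kernel-verified Lean document; each statement's English description precedes it below -/
import Mathlib

section
/- Let σ > 0 and let ρ ∈ L²(ℝ) ∩ L^∞(ℝ) with support contained in [−σ,σ], and define p(t) = (1/(2π))·∫_{−σ}^{σ} ρ(ξ)·e^{iξt} dξ. Then for every α = (α_n)_{n∈ℤ} ∈ ℓ²(ℤ), the series f(t) = Σ_{n∈ℤ} √(π/σ)·p(t + nπ/σ)·α_n converges absolutely for every t ∈ ℝ, the resulting function f belongs to L²(ℝ), and ‖f‖_{L²(ℝ)} ≤ ‖ρ‖_{L^∞}·‖α‖_{ℓ²}. -/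
open MeasureTheory Set Complex AddCircle
open scoped Real ENNReal ComplexConjugate

noncomputable section DHO

def DHOE (σ : ℝ) [Fact (0 < 2*σ)] (z : AddCircle (2*σ)) : ℝ :=
  (equivIoc (2*σ) (-σ) z : ℝ)

def DHOg (σ : ℝ) [Fact (0 < 2*σ)] (ρ : ℝ → ℂ) (t : ℝ) : AddCircle (2*σ) → ℂ :=
  fun z => ρ (DHOE σ z) * Complex.exp (Complex.I * (DHOE σ z) * t)

variable {σ : ℝ} [hfact : Fact (0 < 2*σ)] {ρ : ℝ → ℂ}

lemma DHOE_coe (z : AddCircle (2*σ)) : ((DHOE σ z : ℝ) : AddCircle (2*σ)) = z :=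
  (equivIoc (2*σ) (-σ)).symm_apply_apply z

lemma DHOE_mem (z : AddCircle (2*σ)) : DHOE σ z ∈ Ioc (-σ) (-σ + 2*σ) :=
  (equivIoc (2*σ) (-σ) z).2

lemma DHOg_eq_liftIoc (t : ℝ) :
    DHOg σ ρ t = AddCircle.liftIoc (2*σ) (-σ) (fun ξ => ρ ξ * Complex.exp (Complex.I * ξ * t)) :=
  rfl

lemma DHOE_measurable : Measurable (DHOE σ) :=
  measurable_subtype_coe.comp (AddCircle.measurableEquivIoc (2*σ) (-σ)).measurable

/-- pushforward of circle volume under the representative map -/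
lemma DHOE_map_volume :
    Measure.map (DHOE σ) (volume : Measure (AddCircle (2*σ)))
      = volume.restrict (Ioc (-σ) (-σ + 2*σ)) := by
  have h1 := (AddCircle.measurePreserving_mk (2*σ) (-σ)).map_eq
  rw [← h1, Measure.map_map DHOE_measurable AddCircle.measurable_mk']
  have : Measure.map (DHOE σ ∘ (fun x : ℝ => (x : AddCircle (2*σ))))
      (volume.restrict (Ioc (-σ) (-σ + 2*σ)))
      = Measure.map id (volume.restrict (Ioc (-σ) (-σ + 2*σ))) := by
    apply Measure.map_congr
    filter_upwards [ae_restrict_mem measurableSet_Ioc] with x hx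
    have : (equivIoc (2*σ) (-σ)) x = ⟨x, hx⟩ := by
      rw [Equiv.apply_eq_iff_eq_symm_apply]; rfl
    simp [Function.comp, DHOE, this, id]
  rw [this, Measure.map_id]



/-- The Fourier coefficients of `DHOg` as an interval integral. -/
lemma DHOg_coeff (t : ℝ) (n : ℤ) :
    fourierCoeff (DHOg σ ρ t) n
      = (1 / (2*σ)) • ∫ x in (-σ)..σ,
          fourier (-n) (x : AddCircle (2*σ)) • (ρ x * Complex.exp (Complex.I * x * t)) := by
  have hσ : (0:ℝ) < σ := by have := hfact.out; linarith
  rw [fourierCoeff_eq_intervalIntegral _ n (-σ)]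
  congr 1
  have hb : -σ + 2*σ = σ := by ring
  rw [hb]
  refine intervalIntegral.integral_congr_ae ?_
  have h1 : ∀ᵐ x : ℝ, x ∈ Set.uIoc (-σ) σ → x ∈ Ioc (-σ) (-σ + 2*σ) := by
    filter_upwards with x hx
    rw [uIoc_of_le (by linarith)] at hx
    simpa [hb] using hx
  filter_upwards [h1] with x hx hx'
  have hmem := hx hx'
  rw [DHOg_eq_liftIoc, liftIoc_coe_apply hmem]

/-- `p (t + m·π/σ)` in terms of Fourier coefficients of `DHOg σ ρ t`. -/
lemma DHOp_eq (hσ : 0 < σ) {p : ℝ → ℂ}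
    (hp : ∀ t : ℝ, p t = (1 / (2 * Real.pi)) *
      ∫ ξ in (-σ)..σ, ρ ξ * Complex.exp (Complex.I * ξ * t)) (t : ℝ) (m : ℤ) :
    p (t + m * Real.pi / σ) = (σ / Real.pi : ℝ) • fourierCoeff (DHOg σ ρ t) (-m) := by
  rw [DHOg_coeff, hp]
  rw [smul_smul]
  have hπ : (0:ℝ) < Real.pi := Real.pi_pos
  have h1 : (σ / Real.pi) * (1 / (2*σ)) = 1 / (2 * Real.pi) := by
    field_simp
  rw [h1]
  have h2 : ∀ x : ℝ, fourier (-(-m)) (x : AddCircle (2*σ)) • (ρ x * Complex.exp (Complex.I * x * t))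
      = ρ x * Complex.exp (Complex.I * x * (t + m * Real.pi / σ)) := by
    intro x
    rw [neg_neg, fourier_coe_apply, smul_eq_mul]
    have e1 : Complex.exp (2 * (Real.pi:ℂ) * Complex.I * (m:ℂ) * (x:ℂ) / ((2 * σ : ℝ):ℂ))
        = Complex.exp (Complex.I * (x:ℂ) * ((m * Real.pi / σ : ℝ):ℂ)) := by
      congr 1
      have hσ' : (σ:ℂ) ≠ 0 := Complex.ofReal_ne_zero.2 hσ.ne'
      push_cast
      field_simp
    rw [e1]
    push_cast
    rw [mul_add, Complex.exp_add]
    ring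
  simp_rw [h2]
  rw [Complex.real_smul]
  push_cast
  ring

lemma DHO_haar_ac : (haarAddCircle : Measure (AddCircle (2*σ))) ≪ volume := by
  rw [AddCircle.volume_eq_smul_haarAddCircle]
  exact Measure.absolutelyContinuous_smul
    (by
      have := hfact.out
      simp only [ne_eq, ENNReal.ofReal_eq_zero, not_le]
      linarith)

lemma DHO_ae {P : ℝ → Prop} (h : ∀ᵐ x : ℝ, P x) :
    ∀ᵐ z : AddCircle (2*σ) ∂haarAddCircle, P (DHOE σ z) := by
  refine DHO_haar_ac.ae_le ?_
  refine ae_of_ae_map DHOE_measurable.aemeasurable ?_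
  rw [DHOE_map_volume]
  exact ae_restrict_of_ae h

lemma DHOg_aesm (h : AEStronglyMeasurable ρ volume) (t : ℝ) :
    AEStronglyMeasurable (DHOg σ ρ t) haarAddCircle := by
  have h1 : AEStronglyMeasurable (ρ ∘ DHOE σ) (volume : Measure (AddCircle (2*σ))) := by
    refine AEStronglyMeasurable.comp_aemeasurable ?_ DHOE_measurable.aemeasurable
    rw [DHOE_map_volume]
    exact h.restrict
  have h2 : Measurable fun z : AddCircle (2*σ) => Complex.exp (Complex.I * (DHOE σ z) * t) :=
    Complex.measurable_exp.comp
      ((measurable_const.mul (Complex.measurable_ofReal.comp DHOE_measurable)).mul measurable_const)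
  exact AEStronglyMeasurable.mono_ac DHO_haar_ac
    ((h1.mul h2.aestronglyMeasurable) : AEStronglyMeasurable
      (fun z => ρ (DHOE σ z) * Complex.exp (Complex.I * (DHOE σ z) * t)) _)

lemma DHOg_bound {M : ℝ} (h : ∀ᵐ x : ℝ, ‖ρ x‖ ≤ M) (t : ℝ) :
    ∀ᵐ z : AddCircle (2*σ) ∂haarAddCircle, ‖DHOg σ ρ t z‖ ≤ M := by
  filter_upwards [DHO_ae h] with z hz
  have : ‖Complex.exp (Complex.I * (DHOE σ z) * t)‖ = 1 := by
    rw [Complex.norm_exp]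
    simp
  rw [DHOg, norm_mul, this, mul_one]
  exact hz

lemma DHOg_mem2 {M : ℝ} (hm : AEStronglyMeasurable ρ volume)
    (h : ∀ᵐ x : ℝ, ‖ρ x‖ ≤ M) (t : ℝ) :
    MemLp (DHOg σ ρ t) 2 haarAddCircle :=
  (memLp_top_of_bound (DHOg_aesm hm t) M (DHOg_bound h t)).mono_exponent le_top

/-- shift identity -/
lemma DHOg_shift (hσ : 0 < σ) (t : ℝ) (k : ℤ) :
    DHOg σ ρ (t + k * Real.pi / σ) = fun z => fourier k z * DHOg σ ρ t z := by
  funext z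
  have hz : fourier k z = Complex.exp (2 * Real.pi * Complex.I * k * (DHOE σ z) / ((2*σ:ℝ):ℂ)) := by
    conv_lhs => rw [← DHOE_coe z]
    rw [fourier_coe_apply]
  rw [DHOg, DHOg, hz]
  have e1 : (Complex.I * (DHOE σ z) * ((t + k * Real.pi / σ : ℝ):ℂ))
      = Complex.I * (DHOE σ z) * (t:ℂ) + 2 * Real.pi * Complex.I * k * (DHOE σ z) / ((2*σ:ℝ):ℂ) := by
    have hσ' : (σ:ℂ) ≠ 0 := Complex.ofReal_ne_zero.2 hσ.ne'
    push_cast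
    field_simp
  push_cast
  push_cast at e1
  rw [e1, Complex.exp_add]
  ring

section hilbert

variable {T : ℝ} [hT : Fact (0 < T)]

lemma DHO_coeff_toLp {h : AddCircle T → ℂ} (hm : MemLp h 2 haarAddCircle) (n : ℤ) :
    fourierCoeff (((hm.toLp h) : Lp ℂ 2 haarAddCircle) : AddCircle T → ℂ) n = fourierCoeff h n := by
  apply integral_congr_ae
  filter_upwards [hm.coeFn_toLp] with x hx
  rw [hx]

lemma DHO_summable_coeff_Lp (f : Lp ℂ 2 (@haarAddCircle T hT)) :
    Summable fun i : ℤ => ‖fourierCoeff (⇑f) i‖^2 := by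
  have h := lp.memℓp (fourierBasis.repr f)
  rw [memℓp_gen_iff (by norm_num : (0:ℝ) < (2:ℝ≥0∞).toReal)] at h
  refine h.congr fun i => ?_
  rw [fourierBasis_repr]
  norm_num

lemma DHO_summable_coeff {h : AddCircle T → ℂ} (hm : MemLp h 2 haarAddCircle) :
    Summable fun i : ℤ => ‖fourierCoeff h i‖^2 := by
  refine (DHO_summable_coeff_Lp (hm.toLp h)).congr fun i => ?_
  rw [DHO_coeff_toLp hm]

lemma DHO_parseval {h : AddCircle T → ℂ} (hm : MemLp h 2 haarAddCircle) :
    ∑' i : ℤ, ‖fourierCoeff h i‖^2 = ∫ z, ‖h z‖^2 ∂haarAddCircle := by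
  have h1 := tsum_sq_fourierCoeff (hm.toLp h)
  have h2 : ∀ i : ℤ, ‖fourierCoeff (((hm.toLp h) : Lp ℂ 2 haarAddCircle) : AddCircle T → ℂ) i‖^2
      = ‖fourierCoeff h i‖^2 := fun i => by rw [DHO_coeff_toLp hm]
  rw [tsum_congr h2] at h1
  rw [h1]
  apply integral_congr_ae
  filter_upwards [hm.coeFn_toLp] with x hx
  rw [hx]

lemma DHO_inner {h₁ h₂ : AddCircle T → ℂ} (hm1 : MemLp h₁ 2 haarAddCircle)
    (hm2 : MemLp h₂ 2 haarAddCircle) :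
    ∫ z, conj (h₁ z) * h₂ z ∂haarAddCircle
      = ∑' i : ℤ, conj (fourierCoeff h₁ i) * fourierCoeff h₂ i := by
  have key : (inner ℂ (hm1.toLp h₁) (hm2.toLp h₂) : ℂ)
      = ∫ z, conj (h₁ z) * h₂ z ∂haarAddCircle := by
    rw [MeasureTheory.L2.inner_def]
    apply integral_congr_ae
    filter_upwards [hm1.coeFn_toLp, hm2.coeFn_toLp] with x hx1 hx2
    rw [hx1, hx2, RCLike.inner_apply, mul_comm]
  have key2 : (inner ℂ (hm1.toLp h₁) (hm2.toLp h₂) : ℂ)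
      = ∑' i : ℤ, conj (fourierCoeff h₁ i) * fourierCoeff h₂ i := by
    rw [← @fourierBasis T hT |>.repr.inner_map_map (hm1.toLp h₁) (hm2.toLp h₂),
      lp.inner_eq_tsum]
    refine tsum_congr fun i => ?_
    rw [RCLike.inner_apply, fourierBasis_repr, fourierBasis_repr,
      DHO_coeff_toLp hm1, DHO_coeff_toLp hm2, mul_comm]
  rw [← key, key2]

lemma DHO_conj_coeff {h : AddCircle T → ℂ} (hm : MemLp h 2 haarAddCircle) (n i : ℤ) :
    fourierCoeff (fun z => conj (fourier (-n) z * h z)) i = conj (fourierCoeff h (n - i)) := by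
  rw [fourierCoeff, fourierCoeff, ← integral_conj]
  apply integral_congr_ae
  filter_upwards with z
  simp only [smul_eq_mul]
  rw [map_mul, map_mul]
  have c1 : conj (fourier (-n) z) = fourier n z := by
    rw [fourier_neg, Complex.conj_conj]
  have c2 : conj (fourier (-(n - i)) z) = fourier (n - i) z := by
    rw [fourier_neg, Complex.conj_conj]
  rw [c1, c2, show n - i = n + -i by ring, fourier_add]
  ring

end hilbert

end DHO


/-- If `ρ ∈ L² ∩ L^∞` is supported in `[−σ,σ]` and
`p(t) = (1/(2π))·∫_{−σ}^{σ} ρ(ξ)e^{iξt}dξ`, then for `α ∈ ℓ²(ℤ)` the series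
`f(t) = Σ_n √(π/σ)·p(t + nπ/σ)·α_n` converges absolutely for every `t`, `f ∈ L²(ℝ)`,
and `‖f‖_{L²} ≤ ‖ρ‖_∞·‖α‖_{ℓ²}`. -/
theorem discrete_hankel_operator_bounded (σ : ℝ) (hσ : 0 < σ) (ρ : ℝ → ℂ)
    (hρ2 : MemLp ρ 2 volume) (hρtop : MemLp ρ ⊤ volume)
    (hsupp : Function.support ρ ⊆ Icc (-σ) σ)
    (p : ℝ → ℂ)
    (hp : ∀ t : ℝ, p t = (1 / (2 * Real.pi)) *
      ∫ ξ in (-σ)..σ, ρ ξ * Complex.exp (Complex.I * ξ * t))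
    (α : ℤ → ℂ) (hα : Summable fun n : ℤ => ‖α n‖ ^ 2) :
    (∀ t : ℝ, Summable fun n : ℤ =>
      ‖(Real.sqrt (Real.pi / σ) : ℂ) * p (t + n * Real.pi / σ) * α n‖) ∧
    MemLp (fun t : ℝ =>
      ∑' n : ℤ, (Real.sqrt (Real.pi / σ) : ℂ) * p (t + n * Real.pi / σ) * α n) 2 volume ∧
    eLpNorm (fun t : ℝ =>
        ∑' n : ℤ, (Real.sqrt (Real.pi / σ) : ℂ) * p (t + n * Real.pi / σ) * α n) 2 volume ≤
      eLpNorm ρ ⊤ volume * ENNReal.ofReal (Real.sqrt (∑' n : ℤ, ‖α n‖ ^ 2)) := by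
  haveI hfact : Fact (0 < 2*σ) := ⟨by linarith⟩
  have hπ := Real.pi_pos
  set M : ℝ := (eLpNorm ρ ⊤ volume).toReal with hMdef
  have hM0 : 0 ≤ M := ENNReal.toReal_nonneg
  have hMbound : ∀ᵐ x : ℝ, ‖ρ x‖ ≤ M := by
    have h := enorm_ae_le_eLpNormEssSup ρ volume
    have hfin : eLpNormEssSup ρ volume ≠ ⊤ := by
      rw [← eLpNorm_exponent_top]; exact hρtop.2.ne
    filter_upwards [h] with x hx
    have h2 := ENNReal.toReal_mono hfin hx
    simpa [hMdef, eLpNorm_exponent_top] using h2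
  have hρm : AEStronglyMeasurable ρ volume := hρtop.1
  -- the ℓ² element and corresponding L² function on the circle
  have hα2 : Memℓp α 2 := memℓp_gen (by
    have : ∀ n : ℤ, ‖α n‖ ^ ((2:ℝ≥0∞).toReal) = ‖α n‖ ^ 2 := fun n => by
      norm_num
    exact hα.congr fun n => (this n).symm)
  let α' : lp (fun _ : ℤ => ℂ) 2 := ⟨α, hα2⟩
  let A : Lp ℂ 2 (@haarAddCircle (2*σ) hfact) := (@fourierBasis (2*σ) hfact).repr.symm α'
  have hA2 : MemLp (⇑A) 2 haarAddCircle := Lp.memLp A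
  have hcoeffA : ∀ i : ℤ, fourierCoeff (⇑A) i = α i := by
    intro i
    rw [← fourierBasis_repr]
    show (fourierBasis.repr (fourierBasis.repr.symm α')) i = α i
    rw [LinearIsometryEquiv.apply_symm_apply]
  have hintA : ∫ z, ‖A z‖^2 ∂haarAddCircle = ∑' n : ℤ, ‖α n‖^2 := by
    rw [← DHO_parseval hA2]
    exact tsum_congr fun i => by rw [hcoeffA]
  -- `g` and `G`
  have hg2 : ∀ t : ℝ, MemLp (DHOg σ ρ t) 2 haarAddCircle := fun t => DHOg_mem2 hρm hMbound t
  set G : ℝ → AddCircle (2*σ) → ℂ := fun t z => DHOg σ ρ t z * A z with hGdef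
  have hGaesm : ∀ t, AEStronglyMeasurable (G t) haarAddCircle :=
    fun t => (DHOg_aesm hρm t).mul (Lp.aestronglyMeasurable A)
  have hGb : ∀ t, ∀ᵐ z ∂haarAddCircle, ‖G t z‖ ≤ M * ‖A z‖ := by
    intro t
    filter_upwards [DHOg_bound hMbound t] with z hz
    calc ‖DHOg σ ρ t z * A z‖ = ‖DHOg σ ρ t z‖ * ‖A z‖ := norm_mul _ _
    _ ≤ M * ‖A z‖ := mul_le_mul_of_nonneg_right hz (norm_nonneg _)
  have hG2 : ∀ t, MemLp (G t) 2 haarAddCircle :=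
    fun t => MemLp.of_le_mul hA2 (hGaesm t) (hGb t)
  -- Fourier coefficients of `G`
  have hGcoeff : ∀ t n, fourierCoeff (G t) n
      = ∑' i : ℤ, fourierCoeff (DHOg σ ρ t) (n - i) * α i := by
    intro t n
    have hH2 : MemLp (fun z : AddCircle (2*σ) => conj (fourier (-n) z * DHOg σ ρ t z))
        2 haarAddCircle := by
      refine (memLp_top_of_bound ?_ M ?_).mono_exponent le_top
      · exact (Complex.continuous_conj.comp_aestronglyMeasurable
          (((fourier (-n)).continuous.aestronglyMeasurable).mul (DHOg_aesm hρm t)))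
      · filter_upwards [DHOg_bound hMbound t] with z hz
        rw [RCLike.norm_conj, norm_mul]
        calc ‖fourier (-n) z‖ * ‖DHOg σ ρ t z‖ = 1 * ‖DHOg σ ρ t z‖ := by
              rw [fourier_apply, Circle.norm_coe]
        _ ≤ M := by rw [one_mul]; exact hz
    have h1 : fourierCoeff (G t) n
        = ∫ z, conj ((fun z : AddCircle (2*σ) => conj (fourier (-n) z * DHOg σ ρ t z)) z)
            * A z ∂haarAddCircle := by
      rw [fourierCoeff]
      refine integral_congr_ae (Filter.Eventually.of_forall fun z => ?_)
      simp only [Complex.conj_conj, smul_eq_mul]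
      ring
    rw [h1, DHO_inner hH2 hA2]
    refine tsum_congr fun i => ?_
    rw [DHO_conj_coeff (hg2 t) n i, Complex.conj_conj, hcoeffA]
  -- pointwise identity for the series
  set c : ℝ := Real.sqrt (Real.pi / σ) with hcdef
  have hc0 : 0 ≤ c := Real.sqrt_nonneg _
  set C : ℂ := ((c * (σ / Real.pi) : ℝ) : ℂ) with hCdef
  have hterm : ∀ s : ℝ, ∀ n : ℤ, (c : ℂ) * p (s + n * Real.pi / σ) * α n
      = C * (fourierCoeff (DHOg σ ρ s) (-n) * α n) := by
    intro s n
    rw [DHOp_eq hσ hp s n, Complex.real_smul]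
    push_cast [hCdef]
    ring
  set F : ℝ → ℂ := fun x : ℝ => ∑' n : ℤ, (c:ℂ) * p (x + n * Real.pi / σ) * α n with hFdef
  have hFval : ∀ s : ℝ, F s = C * fourierCoeff (G s) 0 := by
    intro s
    rw [hFdef]
    simp only
    rw [hGcoeff s 0, ← tsum_mul_left]
    refine tsum_congr fun n => ?_
    rw [hterm s n, zero_sub]
  -- claim 1 : absolute convergence
  have claim1 : ∀ t : ℝ, Summable fun n : ℤ =>
      ‖(c : ℂ) * p (t + n * Real.pi / σ) * α n‖ := by
    intro t
    have ha : Summable fun n : ℤ => ‖fourierCoeff (DHOg σ ρ t) (-n)‖^2 :=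
      (DHO_summable_coeff (hg2 t)).comp_injective neg_injective
    have hab : Summable fun n : ℤ => ‖fourierCoeff (DHOg σ ρ t) (-n)‖ * ‖α n‖ := by
      refine Summable.of_nonneg_of_le (fun n => by positivity) (fun n => ?_)
        ((ha.add hα).div_const 2)
      nlinarith [sq_nonneg (‖fourierCoeff (DHOg σ ρ t) (-n)‖ - ‖α n‖),
        norm_nonneg (fourierCoeff (DHOg σ ρ t) (-n)), norm_nonneg (α n)]
    refine ((hab.mul_left ‖C‖).congr fun n => ?_)
    rw [hterm t n, norm_mul, norm_mul]
  -- continuity of F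
  have hco : ∀ s : ℝ, fourierCoeff (G s) 0 = ∫ z, G s z ∂haarAddCircle := by
    intro s
    rw [fourierCoeff]
    refine integral_congr_ae (Filter.Eventually.of_forall fun z => ?_)
    show fourier (-0) z • G s z = G s z
    rw [neg_zero, fourier_zero, one_smul]
  have hFcont : Continuous F := by
    have h1 : Continuous fun s : ℝ => ∫ z, G s z ∂haarAddCircle := by
      refine continuous_of_dominated hGaesm hGb
        (((Lp.memLp A).integrable one_le_two).norm.const_mul M) ?_
      refine Filter.Eventually.of_forall fun z => ?_
      have hexp : Continuous fun s : ℝ => Complex.exp (Complex.I * (DHOE σ z) * s) :=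
        Complex.continuous_exp.comp (continuous_const.mul Complex.continuous_ofReal)
      show Continuous fun s : ℝ =>
        (ρ (DHOE σ z) * Complex.exp (Complex.I * (DHOE σ z) * s)) * A z
      exact (continuous_const.mul hexp).mul continuous_const
    have h2 : F = fun s => C * ∫ z, G s z ∂haarAddCircle := by
      funext s; rw [hFval s, hco s]
    rw [h2]
    exact continuous_const.mul h1
  -- shift identity for coefficients of G
  have hshift : ∀ t : ℝ, ∀ k : ℤ, fourierCoeff (G (t + k * Real.pi / σ)) 0
      = fourierCoeff (G t) (-k) := by
    intro t k
    rw [fourierCoeff, fourierCoeff]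
    refine integral_congr_ae (Filter.Eventually.of_forall fun z => ?_)
    have h1 : DHOg σ ρ (t + k * Real.pi / σ) z = fourier k z * DHOg σ ρ t z := by
      rw [DHOg_shift hσ t k]
    simp only [hGdef, h1, neg_zero, neg_neg, fourier_zero, one_smul, smul_eq_mul]
    ring
  have hFk : ∀ t : ℝ, ∀ k : ℤ, F (t + k * Real.pi / σ) = C * fourierCoeff (G t) (-k) := by
    intro t k
    rw [hFval (t + k * Real.pi / σ), hshift t k]
  have hsumsq : ∀ t : ℝ, Summable fun k : ℤ => ‖F (t + k * Real.pi / σ)‖^2 := by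
    intro t
    have h := ((DHO_summable_coeff (hG2 t)).comp_injective neg_injective).mul_left (‖C‖^2)
    refine h.congr fun k => ?_
    simp only [Function.comp_apply]
    rw [hFk t k, norm_mul, mul_pow]
  have hKbound : ∀ t : ℝ, (∑' k : ℤ, ‖F (t + k * Real.pi / σ)‖^2)
      ≤ ‖C‖^2 * (M^2 * ∑' n : ℤ, ‖α n‖^2) := by
    intro t
    have h1 : (∑' k : ℤ, ‖F (t + k * Real.pi / σ)‖^2)
        = ‖C‖^2 * ∑' k : ℤ, ‖fourierCoeff (G t) (-k)‖^2 := by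
      rw [← tsum_mul_left]
      exact tsum_congr fun k => by rw [hFk t k, norm_mul, mul_pow]
    have h2 : (∑' k : ℤ, ‖fourierCoeff (G t) (-k)‖^2) = ∑' k : ℤ, ‖fourierCoeff (G t) k‖^2 :=
      (Equiv.neg ℤ).tsum_eq (fun k => ‖fourierCoeff (G t) k‖^2)
    have h3 : (∑' k : ℤ, ‖fourierCoeff (G t) k‖^2) = ∫ z, ‖G t z‖^2 ∂haarAddCircle :=
      DHO_parseval (hG2 t)
    have h4 : ∫ z, ‖G t z‖^2 ∂haarAddCircle ≤ M^2 * ∑' n : ℤ, ‖α n‖^2 := by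
      have hint1 : Integrable (fun z => ‖G t z‖^2) haarAddCircle := (hG2 t).norm.integrable_sq
      have hint2 : Integrable (fun z => M^2 * ‖A z‖^2) haarAddCircle :=
        (hA2.norm.integrable_sq).const_mul _
      have hle : ∀ᵐ z ∂haarAddCircle, ‖G t z‖^2 ≤ M^2 * ‖A z‖^2 := by
        filter_upwards [hGb t] with z hz
        calc ‖G t z‖^2 ≤ (M * ‖A z‖)^2 := pow_le_pow_left₀ (norm_nonneg _) hz 2
        _ = M^2 * ‖A z‖^2 := by ring
      calc ∫ z, ‖G t z‖^2 ∂haarAddCircle ≤ ∫ z, M^2 * ‖A z‖^2 ∂haarAddCircle :=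
            integral_mono_ae hint1 hint2 hle
      _ = M^2 * ∫ z, ‖A z‖^2 ∂haarAddCircle := integral_const_mul _ _
      _ = M^2 * ∑' n : ℤ, ‖α n‖^2 := by rw [hintA]
    rw [h1, h2, h3]
    exact mul_le_mul_of_nonneg_left h4 (by positivity)
  have hC2 : ‖C‖^2 = σ / Real.pi := by
    have h1 : ‖C‖ = c * (σ / Real.pi) := by
      rw [hCdef, Complex.norm_real, Real.norm_eq_abs]
      exact abs_of_nonneg (by positivity)
    rw [h1, mul_pow, hcdef, Real.sq_sqrt (div_nonneg hπ.le hσ.le), div_pow]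
    field_simp
  -- the global L² bound
  set δ : ℝ := Real.pi / σ with hδdef
  have hδ : 0 < δ := by positivity
  set Sα : ℝ := ∑' n : ℤ, ‖α n‖^2 with hSαdef
  have hSα0 : 0 ≤ Sα := tsum_nonneg fun n => by positivity
  set K : ℝ := ‖C‖^2 * (M^2 * Sα) with hKdef
  have hK0 : 0 ≤ K := by positivity
  have hJ : ∫⁻ x, ((‖F x‖₊ : ℝ≥0∞)) ^ (2:ℕ) ∂volume ≤ ENNReal.ofReal K * ENNReal.ofReal δ := by
    have hfd := isAddFundamentalDomain_Ioc hδ 0 (volume)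
    rw [hfd.lintegral_eq_tsum'' (fun x => ((‖F x‖₊ : ℝ≥0∞)) ^ (2:ℕ))]
    have hbij : Function.Bijective (fun k : ℤ =>
        (⟨k • δ, AddSubgroup.zsmul_mem_zmultiples δ k⟩ : AddSubgroup.zmultiples δ)) := by
      constructor
      · intro a b hab
        have h := congrArg (Subtype.val) hab
        simp only [zsmul_eq_mul] at h
        exact_mod_cast mul_left_injective₀ hδ.ne' h
      · rintro ⟨y, hy⟩
        obtain ⟨k, hk⟩ := AddSubgroup.mem_zmultiples_iff.mp hy
        exact ⟨k, Subtype.ext hk⟩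
    rw [← (Equiv.ofBijective _ hbij).tsum_eq]
    simp only [Equiv.ofBijective_apply]
    have hterm' : ∀ k : ℤ, ∀ x : ℝ,
        ((⟨k • δ, AddSubgroup.zsmul_mem_zmultiples δ k⟩ : AddSubgroup.zmultiples δ) +ᵥ x : ℝ)
          = x + (k : ℝ) * Real.pi / σ := by
      intro k x
      show (k • δ) + x = x + (k : ℝ) * Real.pi / σ
      rw [zsmul_eq_mul, hδdef]
      ring
    have hmeas : ∀ k : ℤ, AEMeasurable
        (fun x : ℝ => ((‖F (x + (k : ℝ) * Real.pi / σ)‖₊ : ℝ≥0∞)) ^ (2:ℕ))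
        (volume.restrict (Ioc 0 (0+δ))) := by
      intro k
      have hcontk : Continuous fun x : ℝ => F (x + (k : ℝ) * Real.pi / σ) :=
        hFcont.comp (continuous_id.add continuous_const)
      exact ((hcontk.measurable.nnnorm.coe_nnreal_ennreal).pow_const _).aemeasurable
    calc (∑' k : ℤ, ∫⁻ x in Ioc 0 (0+δ),
          ((‖F ((⟨k • δ, AddSubgroup.zsmul_mem_zmultiples δ k⟩ :
            AddSubgroup.zmultiples δ) +ᵥ x)‖₊ : ℝ≥0∞)) ^ (2:ℕ) ∂volume)
        = ∑' k : ℤ, ∫⁻ x in Ioc 0 (0+δ),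
          ((‖F (x + (k:ℝ) * Real.pi / σ)‖₊ : ℝ≥0∞)) ^ (2:ℕ) ∂volume := by
          refine tsum_congr fun k => ?_
          refine lintegral_congr fun x => ?_
          rw [hterm' k x]
      _ = ∫⁻ x in Ioc 0 (0+δ),
          (∑' k : ℤ, ((‖F (x + (k:ℝ) * Real.pi / σ)‖₊ : ℝ≥0∞)) ^ (2:ℕ)) ∂volume :=
          (lintegral_tsum hmeas).symm
      _ ≤ ∫⁻ _x in Ioc 0 (0+δ), ENNReal.ofReal K ∂volume := by
          refine lintegral_mono fun x => ?_
          have hre : ∀ k : ℤ, ((‖F (x + (k:ℝ) * Real.pi / σ)‖₊ : ℝ≥0∞)) ^ (2:ℕ)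
              = ENNReal.ofReal (‖F (x + (k:ℝ) * Real.pi / σ)‖^2) := by
            intro k
            rw [ENNReal.ofReal_pow (norm_nonneg _), ofReal_norm, enorm_eq_nnnorm]
          simp_rw [hre]
          rw [← ENNReal.ofReal_tsum_of_nonneg (fun k => by positivity) (hsumsq x)]
          exact ENNReal.ofReal_le_ofReal (le_trans (hKbound x) (le_of_eq rfl))
      _ = ENNReal.ofReal K * volume (Ioc (0:ℝ) (0+δ)) := setLIntegral_const _ _
      _ = ENNReal.ofReal K * ENNReal.ofReal δ := by
          rw [Real.volume_Ioc]
          norm_num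
  have hKδ : K * δ = M^2 * Sα := by
    rw [hKdef, hC2, hδdef]
    field_simp
  have hMS : Real.sqrt (M^2 * Sα) = M * Real.sqrt Sα := by
    rw [Real.sqrt_mul (sq_nonneg M), Real.sqrt_sq hM0]
  have hfinal : eLpNorm F 2 volume
      ≤ ENNReal.ofReal M * ENNReal.ofReal (Real.sqrt Sα) := by
    rw [eLpNorm_eq_lintegral_rpow_enorm_toReal (by norm_num) (by norm_num)]
    have h20 : ((2:ℝ≥0∞)).toReal = (2:ℝ) := by norm_num
    rw [h20]
    have hrw : ∀ x : ℝ, ((‖F x‖₊ : ℝ≥0∞)) ^ (2:ℝ) = ((‖F x‖₊ : ℝ≥0∞)) ^ (2:ℕ) := by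
      intro x
      rw [← ENNReal.rpow_natCast]
      norm_num
    simp only [enorm_eq_nnnorm]
    simp_rw [hrw]
    have hJ2 : ∫⁻ x, ((‖F x‖₊ : ℝ≥0∞)) ^ (2:ℕ) ∂volume ≤ ENNReal.ofReal (M^2 * Sα) := by
      refine le_trans hJ ?_
      rw [← ENNReal.ofReal_mul hK0, hKδ]
    calc (∫⁻ x, ((‖F x‖₊ : ℝ≥0∞)) ^ (2:ℕ) ∂volume) ^ ((1:ℝ)/2)
        ≤ (ENNReal.ofReal (M^2 * Sα)) ^ ((1:ℝ)/2) :=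
          ENNReal.rpow_le_rpow hJ2 (by norm_num)
      _ = ENNReal.ofReal ((M^2 * Sα) ^ ((1:ℝ)/2)) :=
          ENNReal.ofReal_rpow_of_nonneg (mul_nonneg (sq_nonneg M) hSα0) (by norm_num)
      _ = ENNReal.ofReal (M * Real.sqrt Sα) := by
          rw [show (M^2 * Sα) ^ ((1:ℝ)/2) = Real.sqrt (M^2 * Sα) from
            (Real.sqrt_eq_rpow _).symm, hMS]
      _ = ENNReal.ofReal M * ENNReal.ofReal (Real.sqrt Sα) :=
          ENNReal.ofReal_mul hM0
  refine ⟨claim1, ?_, ?_⟩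
  · refine ⟨hFcont.aestronglyMeasurable, ?_⟩
    exact lt_of_le_of_lt hfinal (ENNReal.mul_lt_top ENNReal.ofReal_lt_top ENNReal.ofReal_lt_top)
  · have hMe : ENNReal.ofReal M = eLpNorm ρ ⊤ volume := ENNReal.ofReal_toReal hρtop.2.ne
    calc eLpNorm F 2 volume ≤ ENNReal.ofReal M * ENNReal.ofReal (Real.sqrt Sα) := hfinal
    _ = eLpNorm ρ ⊤ volume * ENNReal.ofReal (Real.sqrt Sα) := by rw [hMe]
end

section
/- Let σ > 0 and let p ∈ B¹_σ with I₁ = ∫₀^∞ |p(s)| ds < 1. Let K be the operator K[g](y) = ∫₀^∞ 𝒦(y,x)·g(x) dx with kernel 𝒦(y,x) = ∫₀^∞ conj(p(y+s))·p(s+x) ds. Then for ν = 1 and ν = 2, K is a bounded linear operator on L^ν([0,∞)) with ‖K[g]‖_{L^ν([0,∞))} ≤ I₁²·‖g‖_{L^ν([0,∞))}, the operator I − K is invertible on L^ν([0,∞)), and its inverse is a bounded linear operator with operator norm at most (1 − I₁²)^{−1}. -/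
open MeasureTheory Set ENNReal

noncomputable section GLMAux

local notation "μ0" => (volume.restrict (Ioi (0:ℝ)))

private lemma glm_lint_shift (f : ℝ → ℝ≥0∞) (hf : Measurable f) (a : ℝ) :
    ∫⁻ t in Ioi (0:ℝ), f (t + a) = ∫⁻ t in Ioi a, f t := by
  have h := (measurePreserving_add_right volume a).restrict_preimage
    (measurableSet_Ioi : MeasurableSet (Ioi a))
  have hpre : (· + a) ⁻¹' (Ioi a) = Ioi (0:ℝ) := by ext t; simp [mem_Ioi]
  rw [hpre] at h
  exact h.lintegral_comp hf

private lemma glm_neumann {E : Type*} [NormedAddCommGroup E] [NormedSpace ℂ E] [CompleteSpace E]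
    (K : E →L[ℂ] E) (r : ℝ) (hK : ‖K‖ ≤ r) (hr : r < 1) :
    ∃ Kinv : E →L[ℂ] E, Kinv.comp (1 - K) = 1 ∧ (1 - K).comp Kinv = 1 ∧ ‖Kinv‖ ≤ (1 - r)⁻¹ := by
  have h1 : ‖K‖ < 1 := lt_of_le_of_lt hK hr
  refine ⟨∑' n : ℕ, K ^ n, geom_series_mul_neg K h1, mul_neg_geom_series K h1, ?_⟩
  have := tsum_geometric_le_of_norm_lt_one K h1
  have h2 : ‖(1 : E →L[ℂ] E)‖ ≤ 1 := ContinuousLinearMap.norm_id_le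
  have h3 : (1 - ‖K‖)⁻¹ ≤ (1 - r)⁻¹ := inv_anti₀ (by linarith) (by linarith)
  linarith

private lemma glm_rtwo (a : ℝ≥0∞) : a ^ (2:ℝ) = a * a := by
  rw [show (2:ℝ) = ((2:ℕ):ℝ) by norm_num, ENNReal.rpow_natCast, sq]

private lemma glm_half (a : ℝ≥0∞) : a ^ (1/2:ℝ) * a ^ (1/2:ℝ) = a := by
  rw [← ENNReal.rpow_add_of_nonneg (1/2) (1/2) (by norm_num) (by norm_num)]
  norm_num

/-- Cauchy–Schwarz for lintegrals, in product form. -/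
private lemma glm_CS {α : Type*} [MeasurableSpace α] (μ : Measure α) (w v : α → ℝ≥0∞)
    (hw : AEMeasurable w μ) (hv : AEMeasurable v μ) :
    (∫⁻ x, w x * v x ∂μ) * (∫⁻ x, w x * v x ∂μ)
      ≤ (∫⁻ x, w x * w x ∂μ) * (∫⁻ x, v x * v x ∂μ) := by
  have hpq : Real.HolderConjugate 2 2 := Real.HolderConjugate.two_two
  have h := ENNReal.lintegral_mul_le_Lp_mul_Lq μ hpq hw hv
  calc (∫⁻ x, w x * v x ∂μ) * (∫⁻ x, w x * v x ∂μ)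
      ≤ ((∫⁻ x, w x ^ (2:ℝ) ∂μ) ^ (1/2:ℝ) * (∫⁻ x, v x ^ (2:ℝ) ∂μ) ^ (1/2:ℝ)) *
        ((∫⁻ x, w x ^ (2:ℝ) ∂μ) ^ (1/2:ℝ) * (∫⁻ x, v x ^ (2:ℝ) ∂μ) ^ (1/2:ℝ)) := by
        exact mul_le_mul' h h
    _ = ((∫⁻ x, w x ^ (2:ℝ) ∂μ) ^ (1/2:ℝ) * (∫⁻ x, w x ^ (2:ℝ) ∂μ) ^ (1/2:ℝ)) *
        ((∫⁻ x, v x ^ (2:ℝ) ∂μ) ^ (1/2:ℝ) * (∫⁻ x, v x ^ (2:ℝ) ∂μ) ^ (1/2:ℝ)) := by ring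
    _ = (∫⁻ x, w x ^ (2:ℝ) ∂μ) * (∫⁻ x, v x ^ (2:ℝ) ∂μ) := by rw [glm_half, glm_half]
    _ = (∫⁻ x, w x * w x ∂μ) * (∫⁻ x, v x * v x ∂μ) := by simp only [glm_rtwo]

private lemma glm_le_one_add_sq (a : ℝ≥0∞) : a ≤ 1 + a * a := by
  rcases le_total a 1 with h | h
  · exact h.trans (by simp)
  · calc a = 1 * a := (one_mul a).symm
      _ ≤ a * a := mul_le_mul_left h a
      _ ≤ 1 + a * a := le_add_self

/-- Generic construction of the integral operator on `Lp`. -/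
private lemma glm_build (ν : ℝ≥0∞) [Fact (1 ≤ ν)] (k : ℝ → ℝ → ℂ)
    (hk_meas : AEStronglyMeasurable (fun z : ℝ × ℝ => k z.1 z.2) (Measure.prod μ0 μ0))
    (M : ℝ≥0∞) (hM : M ≠ ∞)
    (hInt : ∀ u : ℝ → ℂ, MemLp u ν μ0 → ∀ y : ℝ, Integrable (fun x => k y x * u x) μ0)
    (hbound : ∀ u : ℝ → ℂ, MemLp u ν μ0 →
      eLpNorm (fun y => ∫ x, k y x * u x ∂μ0) ν μ0 ≤ M * eLpNorm u ν μ0) :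
    ∃ K : Lp ℂ ν μ0 →L[ℂ] Lp ℂ ν μ0,
      (∀ g : Lp ℂ ν μ0, (K g : ℝ → ℂ) =ᵐ[μ0] fun y => ∫ x, k y x * g x ∂μ0) ∧
      ‖K‖ ≤ M.toReal := by
  have hFcongr : ∀ u v : ℝ → ℂ, u =ᵐ[μ0] v →
      (fun y => ∫ x, k y x * u x ∂μ0) = (fun y => ∫ x, k y x * v x ∂μ0) := by
    intro u v huv
    funext y
    exact integral_congr_ae (huv.mono fun x hx => by dsimp only; rw [hx])
  have hFmem : ∀ u : ℝ → ℂ, MemLp u ν μ0 →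
      MemLp (fun y => ∫ x, k y x * u x ∂μ0) ν μ0 := by
    intro u hu
    refine ⟨(hk_meas.mul hu.1.comp_snd).integral_prod_right', lt_of_le_of_lt (hbound u hu) ?_⟩
    exact ENNReal.mul_lt_top hM.lt_top hu.2
  let T : Lp ℂ ν μ0 →ₗ[ℂ] Lp ℂ ν μ0 :=
    { toFun := fun g => (hFmem _ (Lp.memLp g)).toLp (fun y => ∫ x, k y x * g x ∂μ0)
      map_add' := by
        intro g g'
        rw [← MemLp.toLp_add]
        refine MemLp.toLp_congr _ _ ?_
        rw [hFcongr _ _ (Lp.coeFn_add g g')]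
        refine Filter.Eventually.of_forall fun y => ?_
        show ∫ x, k y x * (⇑g + ⇑g') x ∂μ0
            = (∫ x, k y x * g x ∂μ0) + ∫ x, k y x * g' x ∂μ0
        simp only [Pi.add_apply, mul_add]
        exact integral_add (hInt _ (Lp.memLp g) y) (hInt _ (Lp.memLp g') y)
      map_smul' := by
        intro c g
        simp only [RingHom.id_apply]
        rw [← MemLp.toLp_const_smul]
        refine MemLp.toLp_congr _ _ ?_
        rw [hFcongr _ _ (Lp.coeFn_smul c g)]
        refine Filter.Eventually.of_forall fun y => ?_
        show ∫ x, k y x * (c • ⇑g) x ∂μ0 = (c • fun y => ∫ x, k y x * g x ∂μ0) y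
        simp only [Pi.smul_apply, smul_eq_mul, mul_left_comm _ c]
        exact integral_const_mul c _ }
  have hTnorm : ∀ g, ‖T g‖ ≤ M.toReal * ‖g‖ := by
    intro g
    have hTg : T g = (hFmem _ (Lp.memLp g)).toLp (fun y => ∫ x, k y x * g x ∂μ0) := rfl
    rw [hTg, Lp.norm_toLp, Lp.norm_def, ← ENNReal.toReal_mul]
    exact ENNReal.toReal_mono (ENNReal.mul_ne_top hM (Lp.eLpNorm_ne_top g))
      (hbound _ (Lp.memLp g))
  refine ⟨T.mkContinuous M.toReal hTnorm, fun g => ?_,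
    LinearMap.mkContinuous_norm_le _ ENNReal.toReal_nonneg _⟩
  exact MemLp.coeFn_toLp (hFmem _ (Lp.memLp g))


/-- L¹ estimates for the kernel operator. -/
private lemma glm_est_one (k : ℝ → ℝ → ℂ)
    (hk_meas : AEStronglyMeasurable (fun z : ℝ × ℝ => k z.1 z.2) (Measure.prod μ0 μ0))
    (hks : ∀ y, AEStronglyMeasurable (k y) μ0)
    (B : ℝ≥0∞) (hB : B ≠ ∞) (hkB : ∀ y x, (‖k y x‖₊ : ℝ≥0∞) ≤ B)
    (M : ℝ≥0∞) (hM : M ≠ ∞)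
    (hcol : ∀ x ∈ Ioi (0:ℝ), ∫⁻ y, (‖k y x‖₊ : ℝ≥0∞) ∂μ0 ≤ M) :
    (∀ u : ℝ → ℂ, MemLp u 1 μ0 → ∀ y : ℝ, Integrable (fun x => k y x * u x) μ0) ∧
    (∀ u : ℝ → ℂ, MemLp u 1 μ0 →
      eLpNorm (fun y => ∫ x, k y x * u x ∂μ0) 1 μ0 ≤ M * eLpNorm u 1 μ0) := by
  have hkBr : ∀ y x, ‖k y x‖ ≤ B.toReal := by
    intro y x
    have := ENNReal.toReal_mono hB (hkB y x)
    simpa using this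
  constructor
  · intro u hu y
    have hui : Integrable u μ0 := memLp_one_iff_integrable.mp hu
    refine Integrable.mono' (hui.norm.const_mul B.toReal) ((hks y).mul hu.1) ?_
    refine Filter.Eventually.of_forall fun x => ?_
    rw [norm_mul]
    exact mul_le_mul_of_nonneg_right (hkBr y x) (norm_nonneg _)
  · intro u hu
    rw [eLpNorm_one_eq_lintegral_enorm, eLpNorm_one_eq_lintegral_enorm]
    have hjm : AEMeasurable (fun z : ℝ × ℝ => (‖k z.1 z.2‖₊ : ℝ≥0∞) * ‖u z.2‖₊)
        (Measure.prod μ0 μ0) := hk_meas.enorm.mul hu.1.comp_snd.enorm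
    calc ∫⁻ y, ‖∫ x, k y x * u x ∂μ0‖₊ ∂μ0
        ≤ ∫⁻ y, ∫⁻ x, (‖k y x‖₊ : ℝ≥0∞) * ‖u x‖₊ ∂μ0 ∂μ0 := by
          refine lintegral_mono fun y => ?_
          calc (‖∫ x, k y x * u x ∂μ0‖₊ : ℝ≥0∞)
              ≤ ∫⁻ x, ‖k y x * u x‖₊ ∂μ0 := enorm_integral_le_lintegral_enorm _
            _ = ∫⁻ x, (‖k y x‖₊ : ℝ≥0∞) * ‖u x‖₊ ∂μ0 := by
                simp only [nnnorm_mul, ENNReal.coe_mul]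
      _ = ∫⁻ x, ∫⁻ y, (‖k y x‖₊ : ℝ≥0∞) * ‖u x‖₊ ∂μ0 ∂μ0 :=
          lintegral_lintegral_swap hjm
      _ = ∫⁻ x, (∫⁻ y, (‖k y x‖₊ : ℝ≥0∞) ∂μ0) * ‖u x‖₊ ∂μ0 := by
          refine lintegral_congr fun x => ?_
          exact lintegral_mul_const' _ _ ENNReal.coe_ne_top
      _ ≤ ∫⁻ x, M * ‖u x‖₊ ∂μ0 := by
          refine lintegral_mono_ae ?_
          filter_upwards [ae_restrict_mem measurableSet_Ioi] with x hx
          exact mul_le_mul_left (hcol x hx) _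
      _ = M * ∫⁻ x, ‖u x‖₊ ∂μ0 := lintegral_const_mul' _ _ hM

/-- L² estimates for the kernel operator (Schur test). -/
private lemma glm_est_two (k : ℝ → ℝ → ℂ)
    (hk_meas : AEStronglyMeasurable (fun z : ℝ × ℝ => k z.1 z.2) (Measure.prod μ0 μ0))
    (hks : ∀ y, AEStronglyMeasurable (k y) μ0)
    (B : ℝ≥0∞) (hB : B ≠ ∞) (hkB : ∀ y x, (‖k y x‖₊ : ℝ≥0∞) ≤ B)
    (M' : ℝ≥0∞) (hM' : M' ≠ ∞) (hrowAll : ∀ y, ∫⁻ x, (‖k y x‖₊ : ℝ≥0∞) ∂μ0 ≤ M')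
    (M : ℝ≥0∞) (hM : M ≠ ∞)
    (hrow : ∀ y ∈ Ioi (0:ℝ), ∫⁻ x, (‖k y x‖₊ : ℝ≥0∞) ∂μ0 ≤ M)
    (hcol : ∀ x ∈ Ioi (0:ℝ), ∫⁻ y, (‖k y x‖₊ : ℝ≥0∞) ∂μ0 ≤ M) :
    (∀ u : ℝ → ℂ, MemLp u 2 μ0 → ∀ y : ℝ, Integrable (fun x => k y x * u x) μ0) ∧
    (∀ u : ℝ → ℂ, MemLp u 2 μ0 →
      eLpNorm (fun y => ∫ x, k y x * u x ∂μ0) 2 μ0 ≤ M * eLpNorm u 2 μ0) := by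
  have hS : ∀ u : ℝ → ℂ, MemLp u 2 μ0 →
      ∫⁻ x, (‖u x‖₊ : ℝ≥0∞) * ‖u x‖₊ ∂μ0 < ∞ := by
    intro u hu
    have h := (eLpNorm_lt_top_iff_lintegral_rpow_enorm_lt_top
      (by norm_num : (2:ℝ≥0∞) ≠ 0) (by norm_num : (2:ℝ≥0∞) ≠ ∞)).mp hu.2
    have h2 : (2:ℝ≥0∞).toReal = (2:ℝ) := by norm_num
    rw [h2] at h
    simpa only [glm_rtwo, enorm_eq_nnnorm] using h
  have hIntAll : ∀ u : ℝ → ℂ, MemLp u 2 μ0 → ∀ y : ℝ,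
      Integrable (fun x => k y x * u x) μ0 := by
    intro u hu y
    refine ⟨(hks y).mul hu.1, ?_⟩
    show (∫⁻ x, (‖k y x * u x‖₊ : ℝ≥0∞) ∂μ0) < ∞
    calc ∫⁻ x, (‖k y x * u x‖₊ : ℝ≥0∞) ∂μ0
        = ∫⁻ x, (‖k y x‖₊ : ℝ≥0∞) * ‖u x‖₊ ∂μ0 := by
          simp only [nnnorm_mul, ENNReal.coe_mul]
      _ ≤ ∫⁻ x, ((‖k y x‖₊ : ℝ≥0∞) + B * ((‖u x‖₊ : ℝ≥0∞) * ‖u x‖₊)) ∂μ0 := by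
          refine lintegral_mono fun x => ?_
          calc (‖k y x‖₊ : ℝ≥0∞) * ‖u x‖₊
              ≤ (‖k y x‖₊ : ℝ≥0∞) * (1 + (‖u x‖₊ : ℝ≥0∞) * ‖u x‖₊) :=
                mul_le_mul_right (glm_le_one_add_sq _) _
            _ = (‖k y x‖₊ : ℝ≥0∞) + (‖k y x‖₊ : ℝ≥0∞) * ((‖u x‖₊ : ℝ≥0∞) * ‖u x‖₊) := by
                ring
            _ ≤ (‖k y x‖₊ : ℝ≥0∞) + B * ((‖u x‖₊ : ℝ≥0∞) * ‖u x‖₊) :=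
                add_le_add_right (mul_le_mul_left (hkB y x) _) _
      _ = (∫⁻ x, (‖k y x‖₊ : ℝ≥0∞) ∂μ0) + ∫⁻ x, B * ((‖u x‖₊ : ℝ≥0∞) * ‖u x‖₊) ∂μ0 :=
          lintegral_add_left' (hks y).enorm _
      _ < ∞ := by
          have h1 : (∫⁻ x, (‖k y x‖₊ : ℝ≥0∞) ∂μ0) < ∞ :=
            lt_of_le_of_lt (hrowAll y) hM'.lt_top
          have h2 : ∫⁻ x, B * ((‖u x‖₊ : ℝ≥0∞) * ‖u x‖₊) ∂μ0 < ∞ := by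
            rw [lintegral_const_mul' _ _ hB]
            exact ENNReal.mul_lt_top hB.lt_top (hS u hu)
          exact ENNReal.add_lt_top.mpr ⟨h1, h2⟩
  refine ⟨hIntAll, ?_⟩
  intro u hu
  have h2ne0 : (2:ℝ≥0∞) ≠ 0 := by norm_num
  have h2netop : (2:ℝ≥0∞) ≠ ∞ := by norm_num
  have h2toReal : (2:ℝ≥0∞).toReal = (2:ℝ) := by norm_num
  rw [eLpNorm_eq_lintegral_rpow_enorm_toReal h2ne0 h2netop,
    eLpNorm_eq_lintegral_rpow_enorm_toReal h2ne0 h2netop, h2toReal]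
  simp only [glm_rtwo]
  -- notation
  set S : ℝ≥0∞ := ∫⁻ x, (‖u x‖₊ : ℝ≥0∞) * ‖u x‖₊ ∂μ0 with hSdef
  -- pointwise Cauchy-Schwarz
  have hkm : ∀ y, AEMeasurable (fun x => (‖k y x‖₊ : ℝ≥0∞)) μ0 := fun y => (hks y).enorm
  have hum : AEMeasurable (fun x => (‖u x‖₊ : ℝ≥0∞)) μ0 := hu.1.enorm
  have hCS : ∀ y ∈ Ioi (0:ℝ),
      (‖∫ x, k y x * u x ∂μ0‖₊ : ℝ≥0∞) * ‖∫ x, k y x * u x ∂μ0‖₊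
        ≤ M * ∫⁻ x, (‖k y x‖₊ : ℝ≥0∞) * ((‖u x‖₊ : ℝ≥0∞) * ‖u x‖₊) ∂μ0 := by
    intro y hy
    have hGle : (‖∫ x, k y x * u x ∂μ0‖₊ : ℝ≥0∞)
        ≤ ∫⁻ x, (‖k y x‖₊ : ℝ≥0∞) * ‖u x‖₊ ∂μ0 := by
      calc (‖∫ x, k y x * u x ∂μ0‖₊ : ℝ≥0∞)
          ≤ ∫⁻ x, ‖k y x * u x‖₊ ∂μ0 := enorm_integral_le_lintegral_enorm _
        _ = _ := by simp only [nnnorm_mul, ENNReal.coe_mul]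
    have hw : AEMeasurable (fun x => ((‖k y x‖₊ : ℝ≥0∞)) ^ (1/2:ℝ)) μ0 :=
      ENNReal.continuous_rpow_const.measurable.comp_aemeasurable (hkm y)
    have hv : AEMeasurable
        (fun x => ((‖k y x‖₊ : ℝ≥0∞)) ^ (1/2:ℝ) * (‖u x‖₊ : ℝ≥0∞)) μ0 := hw.mul hum
    have hcs := glm_CS μ0 _ _ hw hv
    have hwv : ∀ x : ℝ, ((‖k y x‖₊ : ℝ≥0∞)) ^ (1/2:ℝ) *
        (((‖k y x‖₊ : ℝ≥0∞)) ^ (1/2:ℝ) * (‖u x‖₊ : ℝ≥0∞))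
        = (‖k y x‖₊ : ℝ≥0∞) * ‖u x‖₊ := by
      intro x; rw [← mul_assoc, glm_half]
    have hww : ∀ x : ℝ, ((‖k y x‖₊ : ℝ≥0∞)) ^ (1/2:ℝ) * ((‖k y x‖₊ : ℝ≥0∞)) ^ (1/2:ℝ)
        = (‖k y x‖₊ : ℝ≥0∞) := fun x => glm_half _
    have hvv : ∀ x : ℝ, (((‖k y x‖₊ : ℝ≥0∞)) ^ (1/2:ℝ) * (‖u x‖₊ : ℝ≥0∞)) *
        (((‖k y x‖₊ : ℝ≥0∞)) ^ (1/2:ℝ) * (‖u x‖₊ : ℝ≥0∞))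
        = (‖k y x‖₊ : ℝ≥0∞) * ((‖u x‖₊ : ℝ≥0∞) * ‖u x‖₊) := by
      intro x
      rw [mul_mul_mul_comm, glm_half]
    simp only [hwv, hww, hvv] at hcs
    calc (‖∫ x, k y x * u x ∂μ0‖₊ : ℝ≥0∞) * ‖∫ x, k y x * u x ∂μ0‖₊
        ≤ (∫⁻ x, (‖k y x‖₊ : ℝ≥0∞) * ‖u x‖₊ ∂μ0) *
          (∫⁻ x, (‖k y x‖₊ : ℝ≥0∞) * ‖u x‖₊ ∂μ0) := mul_le_mul' hGle hGle
      _ ≤ (∫⁻ x, (‖k y x‖₊ : ℝ≥0∞) ∂μ0) *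
          (∫⁻ x, (‖k y x‖₊ : ℝ≥0∞) * ((‖u x‖₊ : ℝ≥0∞) * ‖u x‖₊) ∂μ0) := hcs
      _ ≤ M * ∫⁻ x, (‖k y x‖₊ : ℝ≥0∞) * ((‖u x‖₊ : ℝ≥0∞) * ‖u x‖₊) ∂μ0 :=
          mul_le_mul_left (hrow y hy) _
  have hjm2 : AEMeasurable (fun z : ℝ × ℝ =>
      (‖k z.1 z.2‖₊ : ℝ≥0∞) * ((‖u z.2‖₊ : ℝ≥0∞) * ‖u z.2‖₊)) (Measure.prod μ0 μ0) :=
    hk_meas.enorm.mul (hu.1.comp_snd.enorm.mul hu.1.comp_snd.enorm)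
  have hmain : ∫⁻ y, (‖∫ x, k y x * u x ∂μ0‖₊ : ℝ≥0∞) * ‖∫ x, k y x * u x ∂μ0‖₊ ∂μ0
      ≤ M * (M * S) := by
    calc ∫⁻ y, (‖∫ x, k y x * u x ∂μ0‖₊ : ℝ≥0∞) * ‖∫ x, k y x * u x ∂μ0‖₊ ∂μ0
        ≤ ∫⁻ y, M * ∫⁻ x, (‖k y x‖₊ : ℝ≥0∞) * ((‖u x‖₊ : ℝ≥0∞) * ‖u x‖₊) ∂μ0 ∂μ0 := by
          refine lintegral_mono_ae ?_
          filter_upwards [ae_restrict_mem measurableSet_Ioi] with y hy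
          exact hCS y hy
      _ = M * ∫⁻ y, ∫⁻ x, (‖k y x‖₊ : ℝ≥0∞) * ((‖u x‖₊ : ℝ≥0∞) * ‖u x‖₊) ∂μ0 ∂μ0 :=
          lintegral_const_mul' _ _ hM
      _ = M * ∫⁻ x, ∫⁻ y, (‖k y x‖₊ : ℝ≥0∞) * ((‖u x‖₊ : ℝ≥0∞) * ‖u x‖₊) ∂μ0 ∂μ0 := by
          rw [lintegral_lintegral_swap hjm2]
      _ = M * ∫⁻ x, (∫⁻ y, (‖k y x‖₊ : ℝ≥0∞) ∂μ0) * ((‖u x‖₊ : ℝ≥0∞) * ‖u x‖₊) ∂μ0 := by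
          congr 1
          refine lintegral_congr fun x => ?_
          exact lintegral_mul_const' _ _ (by finiteness)
      _ ≤ M * ∫⁻ x, M * ((‖u x‖₊ : ℝ≥0∞) * ‖u x‖₊) ∂μ0 := by
          refine mul_le_mul_right ?_ _
          refine lintegral_mono_ae ?_
          filter_upwards [ae_restrict_mem measurableSet_Ioi] with x hx
          exact mul_le_mul_left (hcol x hx) _
      _ = M * (M * S) := by rw [lintegral_const_mul' _ _ hM]
  calc (∫⁻ y, (‖∫ x, k y x * u x ∂μ0‖₊ : ℝ≥0∞) * ‖∫ x, k y x * u x ∂μ0‖₊ ∂μ0) ^ (1/2:ℝ)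
      ≤ (M * (M * S)) ^ (1/2:ℝ) := ENNReal.rpow_le_rpow hmain (by norm_num)
    _ = M * S ^ (1/2:ℝ) := by
        rw [← mul_assoc, ENNReal.mul_rpow_of_nonneg _ _ (by norm_num : (0:ℝ) ≤ 1/2)]
        congr 1
        rw [← glm_rtwo, ← ENNReal.rpow_mul]
        norm_num

end GLMAux

/-- For `p ∈ B¹_σ` with `I₁ = ∫₀^∞ |p| < 1`, the GLM operator
`K[g](y) = ∫₀^∞ (∫₀^∞ conj(p(y+s))·p(s+x) ds)·g(x) dx` is bounded on `L^ν([0,∞))`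
(`ν = 1, 2`) with `‖K‖ ≤ I₁²`, and `I − K` is invertible with `‖(I − K)⁻¹‖ ≤ (1 − I₁²)⁻¹`. -/
theorem GLM_operator_invertible (σ : ℝ) (hσ : 0 < σ) (p : ℂ → ℂ)
    (hp_entire : Differentiable ℂ p)
    (hp_growth : ∃ C ≥ 0, ∀ z : ℂ, ‖p z‖ ≤ C * Real.exp (σ * |z.im|))
    (hp1 : Integrable (fun t : ℝ => p t))
    (I₁ : ℝ) (hI₁ : I₁ = ∫ s in Ioi (0:ℝ), ‖p s‖) (hI₁lt : I₁ < 1) :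
    (∃ K : Lp ℂ 1 (volume.restrict (Ioi (0:ℝ))) →L[ℂ] Lp ℂ 1 (volume.restrict (Ioi (0:ℝ))),
      (∀ g : Lp ℂ 1 (volume.restrict (Ioi (0:ℝ))),
        (K g : ℝ → ℂ) =ᵐ[volume.restrict (Ioi (0:ℝ))]
          fun y : ℝ => ∫ x in Ioi (0:ℝ),
            (∫ s in Ioi (0:ℝ), (starRingEnd ℂ) (p ((y : ℂ) + s)) * p ((s : ℂ) + x)) * g x) ∧
      ‖K‖ ≤ I₁ ^ 2 ∧
      ∃ Kinv : Lp ℂ 1 (volume.restrict (Ioi (0:ℝ))) →L[ℂ]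
          Lp ℂ 1 (volume.restrict (Ioi (0:ℝ))),
        Kinv.comp (1 - K) = 1 ∧ (1 - K).comp Kinv = 1 ∧ ‖Kinv‖ ≤ (1 - I₁ ^ 2)⁻¹) ∧
    (∃ K : Lp ℂ 2 (volume.restrict (Ioi (0:ℝ))) →L[ℂ] Lp ℂ 2 (volume.restrict (Ioi (0:ℝ))),
      (∀ g : Lp ℂ 2 (volume.restrict (Ioi (0:ℝ))),
        (K g : ℝ → ℂ) =ᵐ[volume.restrict (Ioi (0:ℝ))]
          fun y : ℝ => ∫ x in Ioi (0:ℝ),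
            (∫ s in Ioi (0:ℝ), (starRingEnd ℂ) (p ((y : ℂ) + s)) * p ((s : ℂ) + x)) * g x) ∧
      ‖K‖ ≤ I₁ ^ 2 ∧
      ∃ Kinv : Lp ℂ 2 (volume.restrict (Ioi (0:ℝ))) →L[ℂ]
          Lp ℂ 2 (volume.restrict (Ioi (0:ℝ))),
        Kinv.comp (1 - K) = 1 ∧ (1 - K).comp Kinv = 1 ∧ ‖Kinv‖ ≤ (1 - I₁ ^ 2)⁻¹) := by
  obtain ⟨C, hC0, hC⟩ := hp_growth
  have hpc : Continuous p := hp_entire.continuous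
  set q : ℝ → ℂ := fun t => p t with hq
  have hq_cont : Continuous q := hpc.comp Complex.continuous_ofReal
  have hq_meas : Measurable q := hq_cont.measurable
  have mqE : Measurable (fun t : ℝ => (‖q t‖₊ : ℝ≥0∞)) :=
    hq_meas.nnnorm.coe_nnreal_ennreal
  have hqC : ∀ t : ℝ, ‖q t‖ ≤ C := by
    intro t
    have h := hC (t : ℂ)
    simpa using h
  have hq_int : Integrable q volume := hp1
  have hI₁0 : 0 ≤ I₁ := hI₁ ▸ integral_nonneg fun _ => norm_nonneg _
  set N : ℝ≥0∞ := ENNReal.ofReal I₁ with hNdef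
  have hNne : N ≠ ∞ := ENNReal.ofReal_ne_top
  have hNeq : ∫⁻ t in Ioi (0:ℝ), (‖q t‖₊ : ℝ≥0∞) = N := by
    rw [hNdef, hI₁]
    exact (ofReal_integral_norm_eq_lintegral_enorm hq_int.restrict).symm
  set N0 : ℝ≥0∞ := ∫⁻ t, (‖q t‖₊ : ℝ≥0∞) with hN0def
  have hN0ne : N0 ≠ ∞ := by
    have h : (∫⁻ t, (‖q t‖₊ : ℝ≥0∞)) < ∞ := hq_int.2
    exact h.ne
  have htail : ∀ a : ℝ, 0 ≤ a → ∫⁻ t in Ioi (0:ℝ), (‖q (t + a)‖₊ : ℝ≥0∞) ≤ N := by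
    intro a ha
    rw [glm_lint_shift _ mqE a, ← hNeq]
    exact lintegral_mono_set (Ioi_subset_Ioi ha)
  have htail' : ∀ a : ℝ, 0 ≤ a → ∫⁻ t in Ioi (0:ℝ), (‖q (a + t)‖₊ : ℝ≥0∞) ≤ N := by
    intro a ha
    simp_rw [add_comm a]
    exact htail a ha
  have htail0 : ∀ a : ℝ, ∫⁻ t in Ioi (0:ℝ), (‖q (t + a)‖₊ : ℝ≥0∞) ≤ N0 := by
    intro a
    rw [glm_lint_shift _ mqE a, hN0def]
    exact setLIntegral_le_lintegral _ _
  have htail0' : ∀ a : ℝ, ∫⁻ t in Ioi (0:ℝ), (‖q (a + t)‖₊ : ℝ≥0∞) ≤ N0 := by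
    intro a
    simp_rw [add_comm a]
    exact htail0 a
  -- the kernel
  set k : ℝ → ℝ → ℂ := fun y x =>
    ∫ s in Ioi (0:ℝ), (starRingEnd ℂ) (q (y + s)) * q (s + x) with hkdef
  have hk_eq : ∀ y x : ℝ,
      (∫ s in Ioi (0:ℝ), (starRingEnd ℂ) (p ((y:ℂ) + s)) * p ((s:ℂ) + x)) = k y x := by
    intro y x
    rw [hkdef]
    refine integral_congr_ae (Filter.Eventually.of_forall fun s => ?_)
    simp only [hq]
    push_cast
    rfl
  have hkbnd : ∀ y x : ℝ, (‖k y x‖₊ : ℝ≥0∞)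
      ≤ ∫⁻ s in Ioi (0:ℝ), (‖q (y + s)‖₊ : ℝ≥0∞) * ‖q (s + x)‖₊ := by
    intro y x
    calc (‖k y x‖₊ : ℝ≥0∞)
        ≤ ∫⁻ s in Ioi (0:ℝ), (‖(starRingEnd ℂ) (q (y + s)) * q (s + x)‖₊ : ℝ≥0∞) := by
          rw [hkdef]
          exact enorm_integral_le_lintegral_enorm _
      _ = _ := by
          refine lintegral_congr fun s => ?_
          simp [nnnorm_mul]
  have hk_meas : AEStronglyMeasurable (fun z : ℝ × ℝ => k z.1 z.2)
      (Measure.prod (volume.restrict (Ioi (0:ℝ))) (volume.restrict (Ioi (0:ℝ)))) := by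
    have hcont2 : Continuous (fun w : (ℝ × ℝ) × ℝ =>
        (starRingEnd ℂ) (q (w.1.1 + w.2)) * q (w.2 + w.1.2)) :=
      ((hq_cont.comp (continuous_fst.fst.add continuous_snd)).star).mul
        (hq_cont.comp (continuous_snd.add continuous_fst.snd))
    have h := (hcont2.aestronglyMeasurable (μ :=
      Measure.prod (Measure.prod (volume.restrict (Ioi (0:ℝ)))
        (volume.restrict (Ioi (0:ℝ)))) (volume.restrict (Ioi (0:ℝ))))).integral_prod_right'
    exact h
  have hks : ∀ y : ℝ, AEStronglyMeasurable (k y) (volume.restrict (Ioi (0:ℝ))) := by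
    intro y
    have hcont1 : Continuous (fun w : ℝ × ℝ =>
        (starRingEnd ℂ) (q (y + w.2)) * q (w.2 + w.1)) :=
      ((hq_cont.comp (continuous_const.add continuous_snd)).star).mul
        (hq_cont.comp (continuous_snd.add continuous_fst))
    have h := (hcont1.aestronglyMeasurable (μ :=
      Measure.prod (volume.restrict (Ioi (0:ℝ)))
        (volume.restrict (Ioi (0:ℝ))))).integral_prod_right'
    exact h
  -- row bounds
  have hrow_gen : ∀ (y : ℝ) (Ny : ℝ≥0∞),
      (∫⁻ s in Ioi (0:ℝ), (‖q (y + s)‖₊ : ℝ≥0∞)) ≤ Ny →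
      ∫⁻ x in Ioi (0:ℝ), (‖k y x‖₊ : ℝ≥0∞) ≤ Ny * N := by
    intro y Ny hNy
    have hmeasp : AEMeasurable (fun z : ℝ × ℝ =>
        (‖q (y + z.2)‖₊ : ℝ≥0∞) * (‖q (z.2 + z.1)‖₊ : ℝ≥0∞))
        (Measure.prod (volume.restrict (Ioi (0:ℝ))) (volume.restrict (Ioi (0:ℝ)))) :=
      ((mqE.comp (measurable_const.add measurable_snd)).mul
        (mqE.comp (measurable_snd.add measurable_fst))).aemeasurable
    calc ∫⁻ x in Ioi (0:ℝ), (‖k y x‖₊ : ℝ≥0∞)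
        ≤ ∫⁻ x in Ioi (0:ℝ), ∫⁻ s in Ioi (0:ℝ),
            (‖q (y + s)‖₊ : ℝ≥0∞) * ‖q (s + x)‖₊ := lintegral_mono fun x => hkbnd y x
      _ = ∫⁻ s in Ioi (0:ℝ), ∫⁻ x in Ioi (0:ℝ),
            (‖q (y + s)‖₊ : ℝ≥0∞) * ‖q (s + x)‖₊ := lintegral_lintegral_swap hmeasp
      _ = ∫⁻ s in Ioi (0:ℝ), (‖q (y + s)‖₊ : ℝ≥0∞) *
            ∫⁻ x in Ioi (0:ℝ), (‖q (s + x)‖₊ : ℝ≥0∞) :=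
          lintegral_congr fun s => lintegral_const_mul' _ _ ENNReal.coe_ne_top
      _ ≤ ∫⁻ s in Ioi (0:ℝ), (‖q (y + s)‖₊ : ℝ≥0∞) * N := by
          refine lintegral_mono_ae ?_
          filter_upwards [ae_restrict_mem measurableSet_Ioi] with s hs
          exact mul_le_mul_right (htail' s hs.le) _
      _ = (∫⁻ s in Ioi (0:ℝ), (‖q (y + s)‖₊ : ℝ≥0∞)) * N := lintegral_mul_const' _ _ hNne
      _ ≤ Ny * N := mul_le_mul_left hNy _
  have hrowIoi : ∀ y ∈ Ioi (0:ℝ), ∫⁻ x in Ioi (0:ℝ), (‖k y x‖₊ : ℝ≥0∞) ≤ N * N :=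
    fun y hy => hrow_gen y N (htail' y hy.le)
  have hrowAll : ∀ y : ℝ, ∫⁻ x in Ioi (0:ℝ), (‖k y x‖₊ : ℝ≥0∞) ≤ N0 * N :=
    fun y => hrow_gen y N0 (htail0' y)
  have hcol : ∀ x ∈ Ioi (0:ℝ), ∫⁻ y in Ioi (0:ℝ), (‖k y x‖₊ : ℝ≥0∞) ≤ N * N := by
    intro x hx
    have hmeasp : AEMeasurable (fun z : ℝ × ℝ =>
        (‖q (z.1 + z.2)‖₊ : ℝ≥0∞) * (‖q (z.2 + x)‖₊ : ℝ≥0∞))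
        (Measure.prod (volume.restrict (Ioi (0:ℝ))) (volume.restrict (Ioi (0:ℝ)))) :=
      ((mqE.comp (measurable_fst.add measurable_snd)).mul
        (mqE.comp (measurable_snd.add measurable_const))).aemeasurable
    calc ∫⁻ y in Ioi (0:ℝ), (‖k y x‖₊ : ℝ≥0∞)
        ≤ ∫⁻ y in Ioi (0:ℝ), ∫⁻ s in Ioi (0:ℝ),
            (‖q (y + s)‖₊ : ℝ≥0∞) * ‖q (s + x)‖₊ := lintegral_mono fun y => hkbnd y x
      _ = ∫⁻ s in Ioi (0:ℝ), ∫⁻ y in Ioi (0:ℝ),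
            (‖q (y + s)‖₊ : ℝ≥0∞) * ‖q (s + x)‖₊ := lintegral_lintegral_swap hmeasp
      _ = ∫⁻ s in Ioi (0:ℝ), (∫⁻ y in Ioi (0:ℝ), (‖q (y + s)‖₊ : ℝ≥0∞)) *
            (‖q (s + x)‖₊ : ℝ≥0∞) :=
          lintegral_congr fun s => lintegral_mul_const' _ _ ENNReal.coe_ne_top
      _ ≤ ∫⁻ s in Ioi (0:ℝ), N * (‖q (s + x)‖₊ : ℝ≥0∞) := by
          refine lintegral_mono_ae ?_
          filter_upwards [ae_restrict_mem measurableSet_Ioi] with s hs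
          exact mul_le_mul_left (htail s hs.le) _
      _ = N * ∫⁻ s in Ioi (0:ℝ), (‖q (s + x)‖₊ : ℝ≥0∞) := lintegral_const_mul' _ _ hNne
      _ ≤ N * N := mul_le_mul_right (htail x hx.le) _
  -- uniform bound
  have hqCE : ∀ t : ℝ, (‖q t‖₊ : ℝ≥0∞) ≤ ENNReal.ofReal C := by
    intro t
    rw [← enorm_eq_nnnorm, ← ofReal_norm]
    exact ENNReal.ofReal_le_ofReal (hqC t)
  have hkB : ∀ y x : ℝ, (‖k y x‖₊ : ℝ≥0∞) ≤ ENNReal.ofReal C * N0 := by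
    intro y x
    refine (hkbnd y x).trans ?_
    calc ∫⁻ s in Ioi (0:ℝ), (‖q (y + s)‖₊ : ℝ≥0∞) * ‖q (s + x)‖₊
        ≤ ∫⁻ s in Ioi (0:ℝ), ENNReal.ofReal C * (‖q (s + x)‖₊ : ℝ≥0∞) :=
          lintegral_mono fun s => mul_le_mul_left (hqCE _) _
      _ = ENNReal.ofReal C * ∫⁻ s in Ioi (0:ℝ), (‖q (s + x)‖₊ : ℝ≥0∞) :=
          lintegral_const_mul' _ _ ENNReal.ofReal_ne_top
      _ ≤ _ := mul_le_mul_right (htail0 x) _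
  have hBne : ENNReal.ofReal C * N0 ≠ ∞ := ENNReal.mul_ne_top ENNReal.ofReal_ne_top hN0ne
  have hM2 : N * N ≠ ∞ := ENNReal.mul_ne_top hNne hNne
  have hM'ne : N0 * N ≠ ∞ := ENNReal.mul_ne_top hN0ne hNne
  have hMtoReal : (N * N).toReal = I₁ ^ 2 := by
    rw [ENNReal.toReal_mul, hNdef, ENNReal.toReal_ofReal hI₁0, sq]
  have hI2lt : I₁ ^ 2 < 1 := by nlinarith
  constructor
  · -- ν = 1
    obtain ⟨hInt1, hbd1⟩ := glm_est_one k hk_meas hks _ hBne hkB (N * N) hM2 hcol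
    obtain ⟨K1, hK1f, hK1n⟩ := glm_build 1 k hk_meas (N * N) hM2 hInt1 hbd1
    have hK1n' : ‖K1‖ ≤ I₁ ^ 2 := hMtoReal ▸ hK1n
    obtain ⟨Kinv, h1, h2, h3⟩ := glm_neumann K1 (I₁ ^ 2) hK1n' hI2lt
    refine ⟨K1, fun g => ?_, hK1n', Kinv, h1, h2, h3⟩
    have h := hK1f g
    refine h.trans (Filter.Eventually.of_forall fun y => ?_)
    refine integral_congr_ae (Filter.Eventually.of_forall fun x => ?_)
    dsimp only
    rw [hk_eq y x]
  · -- ν = 2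
    obtain ⟨hInt2, hbd2⟩ := glm_est_two k hk_meas hks _ hBne hkB (N0 * N) hM'ne hrowAll
      (N * N) hM2 hrowIoi hcol
    obtain ⟨K2, hK2f, hK2n⟩ := glm_build 2 k hk_meas (N * N) hM2 hInt2 hbd2
    have hK2n' : ‖K2‖ ≤ I₁ ^ 2 := hMtoReal ▸ hK2n
    obtain ⟨Kinv, h1, h2, h3⟩ := glm_neumann K2 (I₁ ^ 2) hK2n' hI2lt
    refine ⟨K2, fun g => ?_, hK2n', Kinv, h1, h2, h3⟩
    have h := hK2f g
    refine h.trans (Filter.Eventually.of_forall fun y => ?_)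
    refine integral_congr_ae (Filter.Eventually.of_forall fun x => ?_)
    dsimp only
    rw [hk_eq y x]
end

section
/- Let σ > 0 and let ρ ∈ L²(ℝ) ∩ L^∞(ℝ) with support contained in [−σ,σ], and define p(t) = (1/(2π))·∫_{−σ}^{σ} ρ(ξ)·e^{iξt} dξ. Define the doubly infinite Hankel matrix 𝒫_{nm} = (π/σ)·p((m+n)·π/σ) for n, m ∈ ℤ. Then 𝒫 defines a bounded linear operator on ℓ²(ℤ): for every α ∈ ℓ²(ℤ), each series Σ_m 𝒫_{nm}·α_m converges and (Σ_{n∈ℤ} |Σ_{m∈ℤ} 𝒫_{nm}·α_m|²)^{1/2} ≤ ‖ρ‖_{L^∞}·‖α‖_{ℓ²}. -/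
open MeasureTheory Set
open scoped ENNReal

lemma hk_exp_integral (σ : ℝ) (hσ : 0 < σ) (k : ℤ) :
    ∫ ξ in Icc (-σ) σ, Complex.exp (Complex.I * ξ * ((k : ℂ) * Real.pi / σ)) =
      if k = 0 then (2 * σ : ℂ) else 0 := by
  have hσ' : (σ : ℂ) ≠ 0 := by exact_mod_cast hσ.ne'
  rw [integral_Icc_eq_integral_Ioc, ← intervalIntegral.integral_of_le (by linarith : -σ ≤ σ)]
  by_cases hk : k = 0
  · subst hk
    simp only [Int.cast_zero, zero_mul, zero_div, mul_zero, Complex.exp_zero, if_true]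
    simp
    ring
  · have hc : (Complex.I * ((k : ℂ) * Real.pi / σ)) ≠ 0 := by
      apply mul_ne_zero Complex.I_ne_zero
      apply div_ne_zero _ hσ'
      exact mul_ne_zero (by exact_mod_cast hk) (by exact_mod_cast Real.pi_ne_zero)
    have hre : ∀ ξ : ℝ, Complex.I * ξ * ((k : ℂ) * Real.pi / σ)
        = (Complex.I * ((k : ℂ) * Real.pi / σ)) * ξ := fun ξ => by ring
    simp_rw [hre]
    rw [integral_exp_mul_complex hc]
    have h1 : Complex.I * ((k : ℂ) * Real.pi / σ) * (σ : ℝ) = (k : ℂ) * (Real.pi * Complex.I) := by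
      field_simp
    have h2 : Complex.I * ((k : ℂ) * Real.pi / σ) * ((-σ : ℝ) : ℂ)
        = ((-k : ℤ) : ℂ) * (Real.pi * Complex.I) := by
      push_cast; field_simp
    rw [h1, h2, Complex.exp_int_mul, Complex.exp_int_mul, Complex.exp_pi_mul_I, if_neg hk]
    have : ((-1 : ℂ)) ^ (-k) = ((-1 : ℂ)) ^ k := by
      rw [zpow_neg]
      exact inv_eq_of_mul_eq_one_left (by rw [← mul_zpow]; norm_num)
    rw [this, sub_self, zero_div]

/-- The doubly infinite Hankel matrix `𝒫_{nm} = (π/σ)·p((m+n)π/σ)` built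
from a bandlimited `p` (with `ρ ∈ L² ∩ L^∞` supported in `[−σ,σ]`) defines a bounded
linear operator on `ℓ²(ℤ)` with norm at most `‖ρ‖_∞`. -/
theorem hankel_matrix_bounded (σ : ℝ) (hσ : 0 < σ) (ρ : ℝ → ℂ)
    (hρ2 : MemLp ρ 2 volume) (hρtop : MemLp ρ ⊤ volume)
    (hsupp : Function.support ρ ⊆ Icc (-σ) σ)
    (p : ℝ → ℂ)
    (hp : ∀ t : ℝ, p t = (1 / (2 * Real.pi)) *
      ∫ ξ in (-σ)..σ, ρ ξ * Complex.exp (Complex.I * ξ * t))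
    (P : ℤ → ℤ → ℂ)
    (hP : ∀ n m : ℤ, P n m = (Real.pi / σ : ℝ) * p ((m + n) * Real.pi / σ)) :
    ∀ α : ℤ → ℂ, (Summable fun n : ℤ => ‖α n‖ ^ 2) →
      (∀ n : ℤ, Summable fun m : ℤ => P n m * α m) ∧
      (Summable fun n : ℤ => ‖∑' m : ℤ, P n m * α m‖ ^ 2) ∧
      Real.sqrt (∑' n : ℤ, ‖∑' m : ℤ, P n m * α m‖ ^ 2) ≤
        (eLpNorm ρ ⊤ volume).toReal * Real.sqrt (∑' n : ℤ, ‖α n‖ ^ 2) := by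
  intro α hα
  have hσ' : (σ : ℂ) ≠ 0 := by exact_mod_cast hσ.ne'
  have h2σ : (0 : ℝ) < 2 * σ := by linarith
  set μ : Measure ℝ := volume.restrict (Icc (-σ) σ) with hμdef
  haveI : IsFiniteMeasure μ := by
    constructor
    rw [hμdef, Measure.restrict_apply_univ]
    simp [Real.volume_Icc]
  set c : ℝ := (Real.sqrt (2 * σ))⁻¹ with hcdef
  have hcpos : 0 < c := by
    rw [hcdef]; positivity
  have hc2 : (c : ℂ) * c = ((2 * σ : ℝ) : ℂ)⁻¹ := by
    have hcc : c * c = (2 * σ)⁻¹ := by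
      rw [hcdef, ← mul_inv, Real.mul_self_sqrt h2σ.le]
    rw [← Complex.ofReal_mul, hcc, Complex.ofReal_inv]
  set em : ℤ → ℝ → ℂ :=
    fun m ξ => (c : ℂ) * Complex.exp (Complex.I * ξ * ((m : ℂ) * Real.pi / σ)) with hemdef
  have hnorm_em : ∀ m ξ, ‖em m ξ‖ = c := by
    intro m ξ
    rw [hemdef]
    simp only [norm_mul, Complex.norm_real, Real.norm_eq_abs, abs_of_pos hcpos]
    rw [Complex.norm_exp]
    have : (Complex.I * ξ * ((m : ℂ) * Real.pi / σ)).re = 0 := by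
      have : ((m : ℂ) * Real.pi / σ) = ((m * Real.pi / σ : ℝ) : ℂ) := by push_cast; ring
      rw [this]
      simp [Complex.mul_re]
    rw [this, Real.exp_zero, mul_one]
  have hmem : ∀ m, MemLp (em m) 2 μ := by
    intro m
    refine MemLp.of_bound ?_ c (Filter.Eventually.of_forall fun ξ => le_of_eq (hnorm_em m ξ))
    apply Continuous.aestronglyMeasurable
    fun_prop
  have hμint : ∀ g : ℝ → ℂ, (∫ a, g a ∂μ) = ∫ a in Icc (-σ) σ, g a := by
    intro g; rw [hμdef]
  set E : ℤ → Lp ℂ 2 μ := fun m => (hmem m).toLp (em m) with hEdef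
  -- generic inner-product computations
  have hinner : ∀ (u : ℝ → ℂ) (hu : MemLp u 2 μ) (g : Lp ℂ 2 μ),
      (inner ℂ (hu.toLp u) g : ℂ) = ∫ a, (starRingEnd ℂ) (u a) * g a ∂μ := by
    intro u hu g
    rw [L2.inner_def]
    apply integral_congr_ae
    filter_upwards [hu.coeFn_toLp] with a ha
    rw [ha, RCLike.inner_apply, mul_comm]
  have hconj_em : ∀ (n : ℤ) (ξ : ℝ), (starRingEnd ℂ) (em n ξ) = em (-n) ξ := by
    intro n ξ
    rw [hemdef]
    simp only [map_mul, Complex.conj_ofReal, ← Complex.exp_conj]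
    congr 2
    simp only [map_mul, map_div₀, Complex.conj_I, Complex.conj_ofReal, map_intCast]
    push_cast
    ring
  have hONv : Orthonormal ℂ E := by
    rw [orthonormal_iff_ite]
    intro i j
    rw [hEdef]
    simp only
    rw [hinner (em i) (hmem i) ((hmem j).toLp (em j))]
    have : (∫ a, (starRingEnd ℂ) (em i a) * ((hmem j).toLp (em j)) a ∂μ)
        = ∫ a, ((c : ℂ) * c) * Complex.exp (Complex.I * a * (((j - i : ℤ) : ℂ) * Real.pi / σ)) ∂μ := by
      apply integral_congr_ae
      filter_upwards [(hmem j).coeFn_toLp] with a ha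
      rw [ha, hconj_em, hemdef]
      simp only
      rw [mul_mul_mul_comm, ← Complex.exp_add]
      congr 2
      push_cast
      ring
    rw [this, integral_const_mul, hμint, hk_exp_integral σ hσ (j - i)]
    by_cases hij : i = j
    · subst hij
      rw [sub_self, if_pos rfl, if_pos rfl, hc2]
      rw [show ((2 * σ : ℝ) : ℂ) = 2 * (σ:ℂ) by push_cast; ring]
      field_simp
    · rw [if_neg (by omega : ¬ (j - i = 0)), if_neg hij, mul_zero]
  -- the ℓ² element and f
  have hα2 : Memℓp α 2 := by
    apply memℓp_gen
    have : (2 : ℝ≥0∞).toReal = ((2 : ℕ) : ℝ) := by norm_num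
    rw [this]
    simpa [Real.rpow_natCast] using hα
  set αl : lp (fun _ : ℤ => ℂ) 2 := ⟨α, hα2⟩ with hαl
  set f : Lp ℂ 2 μ := (hONv.orthogonalFamily).linearIsometry αl with hfdef
  have hf_sum : HasSum (fun m => α m • E m) f := by
    have h := (hONv.orthogonalFamily).hasSum_linearIsometry αl
    simpa [LinearIsometry.toSpanSingleton_apply] using h
  have hαl_norm : ‖αl‖ = Real.sqrt (∑' n, ‖α n‖ ^ 2) := by
    have h : ‖αl‖ ^ (2:ℝ) = ∑' i, ‖αl i‖ ^ (2:ℝ) := by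
      have h0 := lp.norm_rpow_eq_tsum (f := αl) (by norm_num)
      simpa using h0
    rw [show (∑' n, ‖α n‖ ^ 2) = ‖αl‖ ^ (2:ℝ) by
      rw [h]; congr 1; ext n; rw [← Real.rpow_natCast ‖α n‖ 2]; norm_num; rfl]
    rw [show ‖αl‖ ^ (2:ℝ) = ‖αl‖ ^ (2:ℕ) by rw [← Real.rpow_natCast ‖αl‖ 2]; norm_num]
    exact (Real.sqrt_sq (norm_nonneg _)).symm
  have hf_norm : ‖f‖ = Real.sqrt (∑' n, ‖α n‖ ^ 2) := by
    rw [hfdef, LinearIsometry.norm_map, hαl_norm]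
  -- ρ·f and the Bessel family
  have hρtopμ : MemLp ρ ⊤ μ := hρtop.restrict _
  have hfmem : MemLp (⇑f) 2 μ := Lp.memLp f
  have hRFmem : MemLp (fun ξ => ρ ξ * f ξ) 2 μ := by
    have h := hfmem.smul hρtopμ (r := 2)
    simpa [Pi.smul_def, smul_eq_mul, Pi.mul_def] using h
  set RF : Lp ℂ 2 μ := hRFmem.toLp _ with hRFdef
  have hGmem : ∀ n : ℤ, MemLp (fun ξ => (starRingEnd ℂ) (ρ ξ * em n ξ)) 2 μ := by
    intro n
    have h1 : MemLp (fun ξ => ρ ξ * em n ξ) 2 μ := by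
      have h := (hmem n).smul hρtopμ (r := 2)
      simpa [Pi.smul_def, smul_eq_mul, Pi.mul_def] using h
    refine ⟨Complex.continuous_conj.comp_aestronglyMeasurable h1.1, ?_⟩
    rw [show (fun ξ => (starRingEnd ℂ) (ρ ξ * em n ξ))
        = (starRingEnd ℂ) ∘ (fun ξ => ρ ξ * em n ξ) from rfl]
    calc eLpNorm ((starRingEnd ℂ) ∘ (fun ξ => ρ ξ * em n ξ)) 2 μ
        = eLpNorm (fun ξ => ρ ξ * em n ξ) 2 μ := by
          apply eLpNorm_congr_norm_ae
          exact Filter.Eventually.of_forall fun ξ => by simp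
      _ < ⊤ := h1.2
  set G : ℤ → Lp ℂ 2 μ := fun n => (hGmem n).toLp _ with hGdef
  -- inner product identities
  have hGE : ∀ n m : ℤ, (inner ℂ (G n) (E m) : ℂ) = P n m := by
    intro n m
    rw [hGdef, hEdef]
    simp only
    rw [hinner _ (hGmem n) ((hmem m).toLp (em m))]
    have hpt : (∫ a, (starRingEnd ℂ) ((starRingEnd ℂ) (ρ a * em n a)) * ((hmem m).toLp (em m)) a ∂μ)
        = ((c:ℂ) * c) * ∫ a,
            ρ a * Complex.exp (Complex.I * a * (((m + n : ℤ) * Real.pi / σ : ℝ) : ℂ)) ∂μ := by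
      rw [← integral_const_mul]
      apply integral_congr_ae
      filter_upwards [(hmem m).coeFn_toLp] with a ha
      rw [Complex.conj_conj, ha, hemdef]
      simp only
      rw [show Complex.exp (Complex.I * a * ((((m + n : ℤ) * Real.pi / σ : ℝ)) : ℂ))
          = Complex.exp (Complex.I * a * ((n:ℂ) * Real.pi / σ)) *
            Complex.exp (Complex.I * a * ((m:ℂ) * Real.pi / σ)) from by
        rw [← Complex.exp_add]; congr 1; push_cast; ring]
      ring
    rw [hpt, hμint, hP n m, hp]
    rw [integral_Icc_eq_integral_Ioc, ← intervalIntegral.integral_of_le (by linarith : -σ ≤ σ)]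
    rw [hc2]
    push_cast
    have hπ : ((Real.pi : ℂ)) ≠ 0 := by exact_mod_cast Real.pi_ne_zero
    field_simp
    ring_nf
    congr 1; ext x; ring_nf
  have hGf : ∀ n : ℤ, HasSum (fun m => P n m * α m) (inner ℂ (G n) f : ℂ) := by
    intro n
    have h := (innerSL ℂ (G n)).hasSum hf_sum
    have heq : ∀ m : ℤ, (innerSL ℂ (G n)) (α m • E m) = P n m * α m := by
      intro m
      rw [innerSL_apply_apply, inner_smul_right, hGE, mul_comm]
    simpa [heq] using h
  have hconj_emneg : ∀ (n : ℤ) (ξ : ℝ), (starRingEnd ℂ) (em (-n) ξ) = em n ξ := by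
    intro n ξ
    rw [hconj_em, neg_neg]
  have hGRF : ∀ n : ℤ, (inner ℂ (G n) f : ℂ) = (inner ℂ (E (-n)) RF : ℂ) := by
    intro n
    rw [hGdef, hEdef, hRFdef]
    simp only
    rw [hinner _ (hGmem n) f, hinner _ (hmem (-n)) (hRFmem.toLp _)]
    apply integral_congr_ae
    filter_upwards [hRFmem.coeFn_toLp] with a ha
    rw [ha, Complex.conj_conj, hconj_emneg]
    ring
  -- Bessel
  have hON2 : Orthonormal ℂ (fun n : ℤ => E (-n)) := hONv.comp _ neg_injective
  have hBsum : Summable (fun n : ℤ => ‖(inner ℂ (E (-n)) RF : ℂ)‖ ^ 2) :=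
    hON2.inner_products_summable RF
  have hBle : (∑' n : ℤ, ‖(inner ℂ (E (-n)) RF : ℂ)‖ ^ 2) ≤ ‖RF‖ ^ 2 :=
    hON2.tsum_inner_products_le RF
  have hSeq : ∀ n : ℤ, (∑' m : ℤ, P n m * α m) = (inner ℂ (E (-n)) RF : ℂ) := by
    intro n
    rw [(hGf n).tsum_eq, hGRF]
  -- RF norm bound
  have hRFnorm : ‖RF‖ ≤ (eLpNorm ρ ⊤ volume).toReal * ‖f‖ := by
    have h1 : eLpNorm (fun ξ => ρ ξ * f ξ) 2 μ ≤ eLpNorm ρ ⊤ μ * eLpNorm (⇑f) 2 μ := by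
      have h := eLpNorm_smul_le_eLpNorm_top_mul_eLpNorm (μ := μ) 2 hfmem.1 ρ
      simpa [smul_eq_mul, Pi.mul_def] using h
    have h2 : eLpNorm ρ ⊤ μ ≤ eLpNorm ρ ⊤ volume := by
      rw [hμdef]; exact eLpNorm_mono_measure _ Measure.restrict_le_self
    have h3 : eLpNorm (fun ξ => ρ ξ * f ξ) 2 μ ≤ eLpNorm ρ ⊤ volume * eLpNorm (⇑f) 2 μ :=
      h1.trans (mul_le_mul_left h2 _)
    have h4 : eLpNorm ρ ⊤ volume * eLpNorm (⇑f) 2 μ ≠ ⊤ :=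
      ENNReal.mul_ne_top hρtop.2.ne hfmem.2.ne
    calc ‖RF‖ = (eLpNorm (fun ξ => ρ ξ * f ξ) 2 μ).toReal := by
          rw [hRFdef, Lp.norm_toLp]
      _ ≤ (eLpNorm ρ ⊤ volume * eLpNorm (⇑f) 2 μ).toReal := ENNReal.toReal_mono h4 h3
      _ = (eLpNorm ρ ⊤ volume).toReal * ‖f‖ := by
          rw [ENNReal.toReal_mul, Lp.norm_def]
  refine ⟨fun n => (hGf n).summable, ?_, ?_⟩
  · simp only [hSeq]; exact hBsum
  · simp only [hSeq]
    calc Real.sqrt (∑' n : ℤ, ‖(inner ℂ (E (-n)) RF : ℂ)‖ ^ 2)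
        ≤ Real.sqrt (‖RF‖ ^ 2) := Real.sqrt_le_sqrt hBle
      _ = ‖RF‖ := Real.sqrt_sq (norm_nonneg _)
      _ ≤ (eLpNorm ρ ⊤ volume).toReal * ‖f‖ := hRFnorm
      _ = (eLpNorm ρ ⊤ volume).toReal * Real.sqrt (∑' n : ℤ, ‖α n‖ ^ 2) := by rw [hf_norm]
end

section
/- Let σ > 0 and let m, n ∈ ℤ with m ≠ n. Then ∫₀^∞ ψ_m(s)·ψ_n(s) ds = ((−1)^{m+n} / (2π²·(n−m)))·(Cin(2|m|π) − Cin(2|n|π)), where Cin(x) = ∫₀^x (1 − cos t)/t dt is the (even) cosine integral. -/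
open MeasureTheory Set Filter intervalIntegral

lemma aux_one_sub_cos_le (x : ℝ) : 1 - Real.cos x ≤ |x| := by
  have h1 : Real.sin (x/2) ^ 2 = 1/2 - Real.cos (2*(x/2))/2 := Real.sin_sq_eq_half_sub _
  rw [show 2*(x/2) = x by ring] at h1
  have h2 : |Real.sin (x/2)| ≤ |x/2| := Real.abs_sin_le_abs
  have h3 : |Real.sin (x/2)| ≤ 1 := Real.abs_sin_le_one _
  have h4 : Real.sin (x/2)^2 ≤ |x/2| := by
    calc Real.sin (x/2)^2 = |Real.sin (x/2)| * |Real.sin (x/2)| := by rw [← abs_mul, ← sq, abs_sq]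
    _ ≤ 1 * |x/2| := mul_le_mul h3 h2 (abs_nonneg _) zero_le_one
    _ = |x/2| := one_mul _
  have h5 : |x/2| = |x|/2 := by rw [abs_div]; norm_num
  linarith

lemma aux_sinc_abs_le_one (x : ℝ) : |Real.sin x / x| ≤ 1 := by
  rcases eq_or_ne x 0 with h | h
  · simp [h]
  · rw [abs_div]
    exact div_le_one_of_le₀ Real.abs_sin_le_abs (abs_nonneg _)

lemma aux_q_meas : Measurable (fun t : ℝ => (1 - Real.cos t) / t) :=
  (measurable_const.sub Real.measurable_cos).div measurable_id

lemma aux_q_abs_le_one (t : ℝ) : |(1 - Real.cos t) / t| ≤ 1 := by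
  rcases eq_or_ne t 0 with h | h
  · simp [h]
  · rw [abs_div]
    apply div_le_one_of_le₀ _ (abs_nonneg _)
    rw [abs_of_nonneg (by nlinarith [Real.cos_le_one t])]
    exact aux_one_sub_cos_le t

lemma aux_intInt {h : ℝ → ℝ} (hm : Measurable h) {M : ℝ} (hb : ∀ v, |h v| ≤ M)
    (x y : ℝ) : IntervalIntegrable h volume x y := by
  rw [intervalIntegrable_iff]
  refine Measure.integrableOn_of_bounded ?_ hm.aestronglyMeasurable (ae_of_all _ hb)
  rw [Set.uIoc]
  exact measure_Ioc_lt_top.ne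

lemma aux_q_neg (t : ℝ) : (1 - Real.cos (-t)) / (-t) = -((1 - Real.cos t) / t) := by
  rw [Real.cos_neg, div_neg]

lemma aux_even (x : ℝ) :
    (∫ t in (0:ℝ)..(-x), (1 - Real.cos t) / t) = ∫ t in (0:ℝ)..x, (1 - Real.cos t) / t := by
  have h := intervalIntegral.integral_comp_neg (a := (0:ℝ)) (b := x)
    (f := fun t : ℝ => (1 - Real.cos t) / t)
  simp only [aux_q_neg, neg_zero, intervalIntegral.integral_neg] at h
  rw [intervalIntegral.integral_symm, ← h, neg_neg]

lemma aux_g_meas : Measurable (fun v : ℝ => (1 - Real.cos (2*v)) / v) :=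
  (measurable_const.sub (Real.measurable_cos.comp (measurable_const_mul 2))).div measurable_id

lemma aux_g_abs_le_two (v : ℝ) : |(1 - Real.cos (2*v)) / v| ≤ 2 := by
  rcases eq_or_ne v 0 with h | h
  · simp [h]
  · rw [abs_div, div_le_iff₀ (abs_pos.2 h)]
    calc |1 - Real.cos (2*v)| = 1 - Real.cos (2*v) := abs_of_nonneg (by nlinarith [Real.cos_le_one (2*v)])
    _ ≤ |2*v| := aux_one_sub_cos_le _
    _ = 2 * |v| := by rw [abs_mul]; norm_num

lemma aux_g_abs_le_div {v : ℝ} (hv : 0 < v) : |(1 - Real.cos (2*v)) / v| ≤ 2 / v := by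
  rw [abs_div, abs_of_pos hv]
  apply div_le_div_of_nonneg_right ?_ hv.le
  calc |1 - Real.cos (2*v)| = 1 - Real.cos (2*v) := abs_of_nonneg (by nlinarith [Real.cos_le_one (2*v)])
  _ ≤ 2 := by nlinarith [Real.neg_one_le_cos (2*v)]

lemma aux_g_eq_q (v : ℝ) : (1 - Real.cos (2*v)) / v = 2 * ((1 - Real.cos (2*v)) / (2*v)) := by
  rcases eq_or_ne v 0 with h | h
  · simp [h]
  · field_simp

lemma sincp_integrable (a b : ℝ) :
    IntegrableOn (fun u => Real.sin (u-a)/(u-a) * (Real.sin (u-b)/(u-b))) (Ioi (0:ℝ)) volume := by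
  set c : ℝ := max |a| |b| with hc
  have hc0 : 0 ≤ c := le_trans (abs_nonneg a) (le_max_left _ _)
  set T : ℝ := 2*c + 2 with hT
  have hT0 : (0:ℝ) < T := by positivity
  have hmeas : Measurable (fun u : ℝ => Real.sin (u-a)/(u-a) * (Real.sin (u-b)/(u-b))) := by
    apply Measurable.mul <;>
      exact (Real.measurable_sin.comp (measurable_id.sub measurable_const)).div
        (measurable_id.sub measurable_const)
  have habs1 : ∀ u : ℝ, |Real.sin (u-a)/(u-a) * (Real.sin (u-b)/(u-b))| ≤ 1 := by
    intro u
    rw [abs_mul]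
    exact mul_le_one₀ (aux_sinc_abs_le_one _) (abs_nonneg _) (aux_sinc_abs_le_one _)
  have h1 : IntegrableOn (fun u => Real.sin (u-a)/(u-a) * (Real.sin (u-b)/(u-b))) (Ioc (0:ℝ) T) volume :=
    Measure.integrableOn_of_bounded measure_Ioc_lt_top.ne hmeas.aestronglyMeasurable
      (ae_of_all _ habs1)
  have h2 : IntegrableOn (fun u => Real.sin (u-a)/(u-a) * (Real.sin (u-b)/(u-b))) (Ioi T) volume := by
    have hg : IntegrableOn (fun u : ℝ => 4 * u ^ (-2:ℝ)) (Ioi T) volume :=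
      (integrableOn_Ioi_rpow_of_lt (by norm_num) hT0).const_mul 4
    refine hg.mono' hmeas.aestronglyMeasurable.restrict ?_
    rw [ae_restrict_iff' measurableSet_Ioi]
    refine ae_of_all _ fun u hu => ?_
    have hTu : T < u := hu
    have hu0 : 0 < u := lt_trans hT0 hTu
    have hac : a ≤ c := le_trans (le_abs_self a) (le_max_left _ _)
    have hbc : b ≤ c := le_trans (le_abs_self b) (le_max_right _ _)
    have hua : u/2 < u - a := by simp only [hT] at hTu; linarith
    have hub : u/2 < u - b := by simp only [hT] at hTu; linarith
    have hu2 : 0 < u/2 := by positivity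
    have key : ∀ d : ℝ, u/2 < u - d → |Real.sin (u-d)/(u-d)| ≤ 2/u := by
      intro d hd
      rw [abs_div]
      apply le_trans (div_le_div_of_nonneg_right (Real.abs_sin_le_one _) (abs_nonneg _))
      rw [abs_of_pos (show (0:ℝ) < u - d by linarith)]
      rw [one_div]
      rw [← one_div]
      rw [div_le_div_iff₀ (by linarith) hu0]
      linarith
    have hrw : 4 * u ^ (-2:ℝ) = (2/u) * (2/u) := by
      rw [Real.rpow_neg hu0.le, show (2:ℝ) = ((2:ℕ):ℝ) by norm_num, Real.rpow_natCast]
      field_simp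
      ring
    rw [Real.norm_eq_abs, hrw, abs_mul]
    exact mul_le_mul (key a hua) (key b hub) (abs_nonneg _) (by positivity)
  have hsub : Ioi (0:ℝ) ⊆ Ioc (0:ℝ) T ∪ Ioi T := by
    rw [Ioc_union_Ioi_eq_Ioi hT0.le]
  exact (h1.union h2).mono_set hsub

lemma tail_tendsto (a b : ℝ) :
    Tendsto (fun R => ∫ v in (R-b)..(R-a), (1 - Real.cos (2*v)) / v) atTop (nhds 0) := by
  set c : ℝ := max |a| |b| with hc
  have hac : a ≤ c := le_trans (le_abs_self a) (le_max_left _ _)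
  have hbc : b ≤ c := le_trans (le_abs_self b) (le_max_right _ _)
  apply squeeze_zero_norm' (a := fun R => (R - c)⁻¹ * (2 * |b - a|))
  · filter_upwards [eventually_ge_atTop (c+1)] with R hR
    have hRc : (0:ℝ) < R - c := by linarith
    have hbound : ∀ v ∈ Set.uIoc (R-b) (R-a), ‖(1 - Real.cos (2*v)) / v‖ ≤ 2/(R-c) := by
      intro v hv
      have hmin : R - c ≤ min (R-b) (R-a) := le_min (by linarith) (by linarith)
      have hv1 : min (R-b) (R-a) < v := hv.1
      have hv0 : 0 < v := lt_of_lt_of_le hRc (le_trans hmin hv1.le)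
      refine le_trans (aux_g_abs_le_div hv0) ?_
      exact div_le_div_of_nonneg_left (by norm_num) hRc (le_trans hmin hv1.le)
    have := intervalIntegral.norm_integral_le_of_norm_le_const hbound
    refine le_trans this (le_of_eq ?_)
    rw [show (R - a) - (R - b) = b - a by ring]
    ring
  · have h1 : Tendsto (fun R : ℝ => R - c) atTop atTop :=
      tendsto_atTop_add_const_right atTop (-c) tendsto_id
    have := (h1.inv_tendsto_atTop).mul_const (2 * |b - a|)
    simpa using this

lemma key_lemma (m n : ℤ) (hmn : m ≠ n) :
    (∫ u in Ioi (0:ℝ),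
      Real.sin (u - (m:ℝ)*Real.pi)/(u - (m:ℝ)*Real.pi) *
        (Real.sin (u - (n:ℝ)*Real.pi)/(u - (n:ℝ)*Real.pi))) =
    ((-1:ℝ)^(m+n) / (2*((n:ℝ)*Real.pi - (m:ℝ)*Real.pi))) *
      ((∫ t in (0:ℝ)..(2*|(m:ℝ)| * Real.pi), (1 - Real.cos t)/t) -
        ∫ t in (0:ℝ)..(2*|(n:ℝ)| * Real.pi), (1 - Real.cos t)/t) := by
  have hπ := Real.pi_pos
  set a : ℝ := (m:ℝ)*Real.pi with ha
  set b : ℝ := (n:ℝ)*Real.pi with hb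
  have hab : a ≠ b := fun h => hmn (by exact_mod_cast mul_right_cancel₀ Real.pi_ne_zero h)
  have hba : b - a ≠ 0 := sub_ne_zero.2 (Ne.symm hab)
  set K : ℝ := (-1:ℝ)^(m+n) / (2*(b - a)) with hK
  -- pointwise identity
  have hpt : ∀ u : ℝ, Real.sin (u-a)/(u-a) * (Real.sin (u-b)/(u-b))
      = K * ((1 - Real.cos (2*(u-b)))/(u-b) - (1 - Real.cos (2*(u-a)))/(u-a)) := by
    intro u
    have hcosab : Real.cos (2*(a-b)) = 1 := by
      rw [show 2*(a-b) = ((m - n : ℤ):ℝ) * (2*Real.pi) by rw [ha, hb]; push_cast; ring]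
      exact Real.cos_int_mul_two_pi _
    have hcosba : Real.cos (2*(b-a)) = 1 := by
      rw [show 2*(b-a) = ((n - m : ℤ):ℝ) * (2*Real.pi) by rw [ha, hb]; push_cast; ring]
      exact Real.cos_int_mul_two_pi _
    rcases eq_or_ne u a with rfl | hua
    · simp [sub_self, hcosab]
    rcases eq_or_ne u b with rfl | hub
    · simp [sub_self, hcosba]
    have hsa : Real.sin (u - a) = (-1:ℝ)^m * Real.sin u := Real.sin_sub_int_mul_pi u m
    have hsb : Real.sin (u - b) = (-1:ℝ)^n * Real.sin u := Real.sin_sub_int_mul_pi u n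
    have hca : Real.cos (2*(u-a)) = Real.cos (2*u) := by
      rw [show 2*(u-a) = 2*u - (m:ℝ)*(2*Real.pi) by rw [ha]; ring]
      exact_mod_cast Real.cos_sub_int_mul_two_pi (2*u) m
    have hcb : Real.cos (2*(u-b)) = Real.cos (2*u) := by
      rw [show 2*(u-b) = 2*u - (n:ℝ)*(2*Real.pi) by rw [hb]; ring]
      exact_mod_cast Real.cos_sub_int_mul_two_pi (2*u) n
    have hc2 : Real.cos (2*u) = 1 - 2 * Real.sin u ^ 2 := by
      rw [Real.cos_two_mul, Real.sin_sq]; ring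
    have hpow : (-1:ℝ)^(m+n) = (-1:ℝ)^m * (-1:ℝ)^n := zpow_add₀ (by norm_num) m n
    have h1 : u - a ≠ 0 := sub_ne_zero.2 hua
    have h2 : u - b ≠ 0 := sub_ne_zero.2 hub
    rw [hsa, hsb, hca, hcb, hc2, hK, hpow]
    field_simp
    ring
  have hgint : ∀ x y : ℝ, IntervalIntegrable (fun v => (1 - Real.cos (2*v))/v) volume x y :=
    aux_intInt aux_g_meas aux_g_abs_le_two
  have hqint : ∀ x y : ℝ, IntervalIntegrable (fun t => (1 - Real.cos t)/t) volume x y :=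
    aux_intInt aux_q_meas aux_q_abs_le_one
  have hgbint : ∀ (d : ℝ) (x y : ℝ),
      IntervalIntegrable (fun u => (1 - Real.cos (2*(u-d)))/(u-d)) volume x y := by
    intro d x y
    exact aux_intInt (aux_g_meas.comp (measurable_id.sub measurable_const))
      (fun u => aux_g_abs_le_two (u - d)) x y
  have hI := intervalIntegral_tendsto_integral_Ioi 0 (sincp_integrable a b) tendsto_id
  have hval : ∀ R : ℝ, (∫ u in (0:ℝ)..R, Real.sin (u-a)/(u-a) * (Real.sin (u-b)/(u-b)))
      = K * ((∫ v in (-b)..(-a), (1 - Real.cos (2*v))/v)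
          - ∫ v in (R-b)..(R-a), (1 - Real.cos (2*v))/v) := by
    intro R
    simp only [hpt]
    rw [intervalIntegral.integral_const_mul]
    rw [intervalIntegral.integral_sub (hgbint b 0 R) (hgbint a 0 R)]
    rw [intervalIntegral.integral_comp_sub_right (f := fun v => (1 - Real.cos (2*v))/v) b,
        intervalIntegral.integral_comp_sub_right (f := fun v => (1 - Real.cos (2*v))/v) a]
    rw [zero_sub, zero_sub]
    rw [← intervalIntegral.integral_add_adjacent_intervals (hgint (-b) (-a)) (hgint (-a) (R-b)),
        ← intervalIntegral.integral_add_adjacent_intervals (hgint (-a) (R-b)) (hgint (R-b) (R-a))]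
    ring
  have hlim : Tendsto (fun R : ℝ => ∫ u in (0:ℝ)..R,
        Real.sin (u-a)/(u-a) * (Real.sin (u-b)/(u-b))) atTop
      (nhds (K * ((∫ v in (-b)..(-a), (1 - Real.cos (2*v))/v) - 0))) := by
    simp only [hval]
    exact (tendsto_const_nhds.sub (tail_tendsto a b)).const_mul K
  have hIoi : (∫ u in Ioi (0:ℝ), Real.sin (u-a)/(u-a) * (Real.sin (u-b)/(u-b)))
      = K * ∫ v in (-b)..(-a), (1 - Real.cos (2*v))/v := by
    have := tendsto_nhds_unique hI hlim
    rw [this, sub_zero]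
  have hodd : (∫ v in (-b)..(-a), (1 - Real.cos (2*v))/v)
      = ∫ v in b..a, (1 - Real.cos (2*v))/v := by
    have h := intervalIntegral.integral_comp_neg (a := a) (b := b)
      (f := fun v => (1 - Real.cos (2*v))/v)
    rw [← h]
    have hneg : ∀ x : ℝ, (1 - Real.cos (2*(-x)))/(-x) = -((1 - Real.cos (2*x))/x) := by
      intro x
      rw [show 2*(-x) = -(2*x) by ring, Real.cos_neg, div_neg]
    simp only [hneg, intervalIntegral.integral_neg]
    rw [intervalIntegral.integral_symm, neg_neg]
  have hsubst : (∫ v in b..a, (1 - Real.cos (2*v))/v)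
      = ∫ t in (2*b)..(2*a), (1 - Real.cos t)/t := by
    simp only [aux_g_eq_q]
    rw [intervalIntegral.integral_const_mul]
    rw [intervalIntegral.integral_comp_mul_left (f := fun t => (1 - Real.cos t)/t)
      (c := (2:ℝ)) two_ne_zero, smul_eq_mul]
    ring
  have hsplit : (∫ t in (2*b)..(2*a), (1 - Real.cos t)/t)
      = (∫ t in (0:ℝ)..(2*a), (1 - Real.cos t)/t) - ∫ t in (0:ℝ)..(2*b), (1 - Real.cos t)/t :=
    (intervalIntegral.integral_interval_sub_left (hqint 0 (2*a)) (hqint 0 (2*b))).symm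
  have habs : ∀ k : ℤ, (∫ t in (0:ℝ)..(2*((k:ℝ)*Real.pi)), (1 - Real.cos t)/t)
      = ∫ t in (0:ℝ)..(2*|(k:ℝ)| * Real.pi), (1 - Real.cos t)/t := by
    intro k
    rcases abs_cases (k:ℝ) with ⟨h1, _⟩ | ⟨h1, _⟩
    · rw [h1]
      congr 1
      ring
    · rw [h1, show 2*(-(k:ℝ))*Real.pi = -(2*((k:ℝ)*Real.pi)) by ring, aux_even]
  rw [hIoi, hodd, hsubst, hsplit, ← habs m, ← habs n]

/-- The normalized translated sinc functions `ψ_n(t) = √(σ/π)·sin(σt − nπ)/(σt − nπ)`. -/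
noncomputable def psi (σ : ℝ) (n : ℤ) (t : ℝ) : ℝ :=
  Real.sqrt (σ / Real.pi) * (Real.sin (σ * t - n * Real.pi) / (σ * t - n * Real.pi))

/-- off-diagonal entries of the quadrature matrix:
`∫₀^∞ ψ_m ψ_n = ((−1)^{m+n}/(2π²(n−m)))·(Cin(2|m|π) − Cin(2|n|π))` for `m ≠ n`,
where `Cin(x) = ∫₀^x (1 − cos t)/t dt`. -/
theorem quadrature_matrix_offdiagonal (σ : ℝ) (hσ : 0 < σ) (m n : ℤ) (hmn : m ≠ n) :
    ∫ s in Ioi (0:ℝ), psi σ m s * psi σ n s =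
      ((-1 : ℝ) ^ (m + n) / (2 * Real.pi ^ 2 * ((n : ℝ) - (m : ℝ)))) *
        ((∫ t in (0:ℝ)..(2 * |(m : ℝ)| * Real.pi), (1 - Real.cos t) / t) -
          ∫ t in (0:ℝ)..(2 * |(n : ℝ)| * Real.pi), (1 - Real.cos t) / t) := by
  have hπ := Real.pi_pos
  have hprod : ∀ s : ℝ, psi σ m s * psi σ n s
      = (σ / Real.pi) * (Real.sin (σ*s - (m:ℝ)*Real.pi)/(σ*s - (m:ℝ)*Real.pi) *
          (Real.sin (σ*s - (n:ℝ)*Real.pi)/(σ*s - (n:ℝ)*Real.pi))) := by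
    intro s
    unfold psi
    rw [show ∀ r x y : ℝ, r*x*(r*y) = r*r*(x*y) from fun _ _ _ => by ring,
      Real.mul_self_sqrt (div_nonneg hσ.le hπ.le)]
  simp only [hprod]
  rw [MeasureTheory.integral_const_mul]
  have hcv := MeasureTheory.integral_comp_mul_left_Ioi
    (fun u => Real.sin (u - (m:ℝ)*Real.pi)/(u - (m:ℝ)*Real.pi) *
      (Real.sin (u - (n:ℝ)*Real.pi)/(u - (n:ℝ)*Real.pi))) 0 hσ
  rw [mul_zero] at hcv
  rw [hcv, smul_eq_mul, key_lemma m n hmn]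
  have hnm : (n:ℝ) - (m:ℝ) ≠ 0 := sub_ne_zero.2 fun h => hmn (by exact_mod_cast h.symm)
  have h1 : σ / Real.pi * (σ⁻¹ * ((-1:ℝ)^(m+n) / (2*((n:ℝ)*Real.pi - (m:ℝ)*Real.pi))))
      = (-1:ℝ)^(m+n) / (2 * Real.pi^2 * ((n:ℝ) - (m:ℝ))) := by
    rw [show (n:ℝ)*Real.pi - (m:ℝ)*Real.pi = ((n:ℝ) - (m:ℝ))*Real.pi by ring]
    field_simp
  rw [← h1]
  ring
end
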